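/- arXiv:1501.02596 — 11 statements merged into one kernel-verified Lean document; each statement's English description precedes it below -/
import Mathlib

section
/- Let X be a real normed linear space of finite dimension n ≥ 2. For every subset D of the closed unit ball of X and every point y in the convex hull of D, the distance from y to D is at most 2(n−1)/n. Equivalently, the CHD-constant ζ_X = sup_{D ⊆ B₁(o)} sup_{y ∈ co D} dist(y, D) satisfies ζ_X ≤ 2(n−1)/n. -/
open Metric Set

set_option maxHeartbeats 1000000

theorem stmt_1 {X : Type*} [NormedAddCommGroup X] [NormedSpace ℝ X]
    [FiniteDimensional ℝ X] (n : ℕ) (hn : 2 ≤ n) (hdim : Module.finrank ℝ X = n)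
    (D : Set X) (hD : D ⊆ Metric.closedBall 0 1)
    (y : X) (hy : y ∈ convexHull ℝ D) :
    Metric.infDist y D ≤ 2 * (n - 1) / n := by
  have hn0 : (0:ℝ) < n := by positivity
  have hn2 : (2:ℝ) ≤ n := by exact_mod_cast hn
  have hrho1 : (1:ℝ) ≤ 2 * (n - 1) / n := by
    rw [le_div_iff₀ hn0]; nlinarith
  obtain ⟨ι, hfin, z, w, hrange, hindep, hwpos, hwsum, hcomb⟩ :=
    eq_pos_convex_span_of_mem_convexHull hy
  have hzD : ∀ i, z i ∈ D := fun i => hrange (mem_range_self i)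
  have hzball : ∀ i, ‖z i‖ ≤ 1 := fun i => by
    simpa [Metric.mem_closedBall, dist_zero_right] using hD (hzD i)
  -- Pigeonhole bound: a point written as a convex combination with at most n positive
  -- weights is within 2(n-1)/n of one of the points z j (with positive weight).
  have key : ∀ (p : X) (v : ι → ℝ), (∀ i, 0 ≤ v i) → (∑ i, v i) = 1 →
      (∑ i, v i • z i) = p →
      ((Finset.univ.filter (fun i => 0 < v i)).card ≤ n) →
      ∃ j, dist p (z j) ≤ 2 * (n - 1) / n := by
    intro p v hv0 hv1 hvc hcard
    classical
    set S := Finset.univ.filter (fun i => 0 < v i) with hS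
    have hsumS : (∑ i ∈ S, v i) = 1 := by
      rw [← hv1]
      apply Finset.sum_subset (Finset.subset_univ S)
      intro i _ hiS
      have hni : ¬ 0 < v i := by simpa [hS] using hiS
      linarith [hv0 i]
    have hSne : S.Nonempty := by
      by_contra h
      rw [Finset.not_nonempty_iff_eq_empty] at h
      rw [h, Finset.sum_empty] at hsumS
      norm_num at hsumS
    have hScard0 : (0:ℝ) < S.card := by
      exact_mod_cast Finset.card_pos.mpr hSne
    -- find j with v j ≥ 1 / S.card
    obtain ⟨j, hjS, hj⟩ :
        ∃ j ∈ S, (1 : ℝ) / S.card ≤ v j := by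
      apply Finset.exists_le_of_sum_le hSne
      rw [hsumS, Finset.sum_const, nsmul_eq_mul]
      rw [mul_one_div, div_self (ne_of_gt hScard0)]
    have hvj : 1 / (n:ℝ) ≤ v j := by
      refine le_trans ?_ hj
      have hcard' : (S.card : ℝ) ≤ n := by exact_mod_cast hcard
      exact one_div_le_one_div_of_le hScard0 hcard'
    refine ⟨j, ?_⟩
    have hdiff : p - z j = ∑ i, v i • (z i - z j) := by
      have : (∑ i, v i • z j) = z j := by
        rw [← Finset.sum_smul, hv1, one_smul]
      calc p - z j = (∑ i, v i • z i) - (∑ i, v i • z j) := by rw [hvc, this]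
        _ = ∑ i, (v i • z i - v i • z j) := by rw [Finset.sum_sub_distrib]
        _ = ∑ i, v i • (z i - z j) := by simp [smul_sub]
    have hbound : ‖p - z j‖ ≤ 2 * (1 - v j) := by
      rw [hdiff]
      calc ‖∑ i, v i • (z i - z j)‖ ≤ ∑ i, ‖v i • (z i - z j)‖ :=
            norm_sum_le _ _
        _ = ∑ i, v i * ‖z i - z j‖ := by
            congr 1; funext i; rw [norm_smul, Real.norm_of_nonneg (hv0 i)]
        _ = ∑ i ∈ Finset.univ.erase j, v i * ‖z i - z j‖ := by
            rw [← Finset.sum_erase_add _ _ (Finset.mem_univ j)]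
            simp
        _ ≤ ∑ i ∈ Finset.univ.erase j, v i * 2 := by
            refine Finset.sum_le_sum fun i _ => ?_
            refine mul_le_mul_of_nonneg_left ?_ (hv0 i)
            calc ‖z i - z j‖ ≤ ‖z i‖ + ‖z j‖ := norm_sub_le _ _
              _ ≤ 2 := by linarith [hzball i, hzball j]
        _ = 2 * (1 - v j) := by
            rw [← Finset.sum_mul]
            have : (∑ i ∈ Finset.univ.erase j, v i) = 1 - v j := by
              have := Finset.sum_erase_add Finset.univ v (Finset.mem_univ j)
              rw [hv1] at this
              linarith
            rw [this]; ring
    rw [dist_eq_norm]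
    refine hbound.trans ?_
    rw [div_le_iff₀ hn0] at hvj
    rw [le_div_iff₀ hn0]
    nlinarith
  -- main case split on the number of points
  rcases le_or_gt (Fintype.card ι) n with hle | hgt
  · -- at most n points: direct pigeonhole
    have hcard : (Finset.univ.filter (fun i => 0 < w i)).card ≤ n :=
      le_trans (Finset.card_le_card (Finset.subset_univ _)) (by simpa using hle)
    obtain ⟨j, hj⟩ := key y w (fun i => (hwpos i).le) hwsum hcomb hcard
    exact le_trans (Metric.infDist_le_dist_of_mem (hzD j)) hj
  · -- n + 1 points: they form an affine basis
    have hcard_le : Fintype.card ι ≤ n + 1 := by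
      have h1 := hindep.card_le_finrank_succ
      have h2 : Module.finrank ℝ (vectorSpan ℝ (Set.range z)) ≤ n := by
        rw [← hdim]; exact Submodule.finrank_le _
      omega
    have hcard : Fintype.card ι = n + 1 := by omega
    haveI : Nonempty ι := by
      rw [← Fintype.card_pos_iff]; omega
    have htop : affineSpan ℝ (Set.range z) = ⊤ := by
      rw [hindep.affineSpan_eq_top_iff_card_eq_finrank_add_one, hcard, hdim]
    let b : AffineBasis ι ℝ X := ⟨z, hindep, htop⟩
    have hbz : ⇑b = z := rfl
    set T := convexHull ℝ (Set.range z) with hT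
    have hTcompact : IsCompact T := (Set.finite_range z).isCompact_convexHull (𝕜 := ℝ)
    have hyT : y ∈ T := by
      have hmem : Finset.univ.centerMass w z ∈ T :=
        Finset.centerMass_mem_convexHull _ (fun i _ => (hwpos i).le)
          (by rw [hwsum]; norm_num) (fun i _ => mem_range_self i)
      rwa [Finset.centerMass_eq_of_sum_1 _ _ hwsum, hcomb] at hmem
    obtain ⟨ystar, hystarT, hmax⟩ :=
      hTcompact.exists_isMaxOn ⟨y, hyT⟩ (continuous_infDist_pt (Set.range z)).continuousOn
    have hmax' : ∀ x ∈ T, infDist x (Set.range z) ≤ infDist ystar (Set.range z) :=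
      isMaxOn_iff.mp hmax
    by_contra hcon
    push_neg at hcon
    have hchain : 2 * ((n:ℝ) - 1) / n < infDist ystar (Set.range z) := by
      have h1 : Metric.infDist y D ≤ infDist y (Set.range z) :=
        Metric.infDist_le_infDist_of_subset hrange (Set.range_nonempty z)
      have h2 := hmax' y hyT
      linarith
    -- barycentric coordinates of ystar
    set v : ι → ℝ := fun i => b.coord i ystar with hv
    have hv0 : ∀ i, 0 ≤ v i := by
      have h := hystarT
      rw [hT, ← hbz, b.convexHull_eq_nonneg_coord] at h
      exact h
    have hv1 : (∑ i, v i) = 1 := b.sum_coord_apply_eq_one ystar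
    have hvc : (∑ i, v i • z i) = ystar := b.linear_combination_coord_eq_self ystar
    rcases le_or_gt ((Finset.univ.filter (fun i => 0 < v i)).card) n with hsle | hsgt
    · obtain ⟨j, hj⟩ := key ystar v hv0 hv1 hvc hsle
      have : infDist ystar (Set.range z) ≤ 2 * ((n:ℝ) - 1) / n :=
        le_trans (Metric.infDist_le_dist_of_mem (mem_range_self j)) hj
      linarith
    · -- all coordinates positive: ystar is interior; push it outward radially
      have hSuniv : (Finset.univ.filter (fun i => 0 < v i)) = Finset.univ := by
        apply Finset.eq_univ_of_card
        have hle' : (Finset.univ.filter (fun i => 0 < v i)).card ≤ Fintype.card ι :=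
          Finset.card_le_card (Finset.subset_univ _)
        omega
      have hvpos : ∀ i, 0 < v i := by
        intro i
        have hi : i ∈ Finset.univ.filter (fun i => 0 < v i) := by
          rw [hSuniv]; exact Finset.mem_univ i
        exact (Finset.mem_filter.mp hi).2
      have hint : ystar ∈ interior T := by
        rw [hT, ← hbz, b.interior_convexHull]
        exact fun i => hvpos i
      obtain ⟨ε, hε, hball⟩ := Metric.isOpen_iff.mp isOpen_interior ystar hint
      set d := infDist ystar (Set.range z) with hd
      have hd1 : (1:ℝ) < d := lt_of_le_of_lt hrho1 hchain
      rcases eq_or_ne ystar 0 with h0 | h0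
      · -- impossible: distance from 0 to any z i is at most 1
        have : d ≤ 1 := by
          obtain ⟨i0⟩ := (inferInstance : Nonempty ι)
          refine le_trans (Metric.infDist_le_dist_of_mem (mem_range_self i0)) ?_
          rw [h0, dist_comm, dist_zero_right]
          exact hzball _
        linarith
      · have hny : 0 < ‖ystar‖ := norm_pos_iff.mpr h0
        set τ := ε / (2 * ‖ystar‖) with hτdef
        have hτ : 0 < τ := by positivity
        set p := ystar + τ • ystar with hp
        have hpT : p ∈ T := by
          apply interior_subset
          apply hball
          rw [Metric.mem_ball, hp, dist_self_add_left, norm_smul,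
            Real.norm_of_nonneg hτ.le]
          have hhalf : τ * ‖ystar‖ = ε / 2 := by rw [hτdef]; field_simp
          rw [hhalf]; linarith
        have hlow : ∀ i, d + τ * (d - 1) ≤ dist p (z i) := by
          intro i
          have hdi : d ≤ ‖ystar - z i‖ := by
            rw [← dist_eq_norm]
            exact Metric.infDist_le_dist_of_mem (mem_range_self i)
          have hkey : (1 + τ) • (ystar - z i) = (p - z i) - τ • z i := by
            rw [hp]; module
          have : (1 + τ) * ‖ystar - z i‖ ≤ ‖p - z i‖ + τ * ‖z i‖ := by
            calc (1 + τ) * ‖ystar - z i‖ = ‖(1 + τ) • (ystar - z i)‖ := by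
                  rw [norm_smul, Real.norm_of_nonneg (by linarith)]
              _ = ‖(p - z i) - τ • z i‖ := by rw [hkey]
              _ ≤ ‖p - z i‖ + ‖τ • z i‖ := norm_sub_le _ _
              _ = ‖p - z i‖ + τ * ‖z i‖ := by
                  rw [norm_smul, Real.norm_of_nonneg hτ.le]
          rw [dist_eq_norm]
          have h1 : (1 + τ) * d ≤ (1 + τ) * ‖ystar - z i‖ :=
            mul_le_mul_of_nonneg_left hdi (by linarith)
          have h2 : τ * ‖z i‖ ≤ τ := by
            have := hzball i
            nlinarith
          nlinarith
        obtain ⟨x0, hx0, heq⟩ := (Set.finite_range z).isCompact.exists_infDist_eq_dist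
          (Set.range_nonempty z) p
        obtain ⟨i0, hi0⟩ := hx0
        have hlow' : d + τ * (d - 1) ≤ infDist p (Set.range z) := by
          rw [heq, ← hi0]
          exact hlow i0
        have hup : infDist p (Set.range z) ≤ d := hmax' p hpT
        nlinarith
end

section
/- In ℓ₁ⁿ (ℝⁿ with the ℓ¹-norm), let e₁,…,eₙ be the standard basis vectors and b = (1/n)(e₁ + ⋯ + eₙ). Then b lies in the convex hull of {e₁,…,eₙ}, each eᵢ has ℓ¹-norm 1, and ‖b − eᵢ‖₁ = 2(n−1)/n for every i. Consequently the CHD-constant of ℓ₁ⁿ is at least 2(n−1)/n. -/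
theorem stmt_2 (n : ℕ) (hn : 0 < n)
    (e : Fin n → PiLp 1 fun _ : Fin n => ℝ)
    (he : ∀ i, e i = (WithLp.equiv 1 (Fin n → ℝ)).symm (Pi.single i 1))
    (b : PiLp 1 fun _ : Fin n => ℝ) (hb : b = (n : ℝ)⁻¹ • ∑ i, e i) :
    b ∈ convexHull ℝ (Set.range e) ∧
    (∀ i, ‖e i‖ = 1) ∧
    (∀ i, ‖b - e i‖ = 2 * (n - 1) / n) ∧
    ∃ D ⊆ Metric.closedBall (0 : PiLp 1 fun _ : Fin n => ℝ) 1,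
      ∃ y ∈ convexHull ℝ D, 2 * ((n : ℝ) - 1) / n ≤ Metric.infDist y D := by
  have hn' : (0 : ℝ) < n := by exact_mod_cast hn
  have hninv : (n : ℝ)⁻¹ ≤ 1 := by
    rw [inv_le_one_iff₀]; right; exact_mod_cast hn
  have hnorm : ∀ x : PiLp 1 fun _ : Fin n => ℝ, ‖x‖ = ∑ i, |x i| := by
    intro x
    rw [PiLp.norm_eq_sum (by norm_num)]
    simp [Real.rpow_natCast]
  have hcoord : ∀ i j, (e i) j = if j = i then (1 : ℝ) else 0 := by
    intro i j
    rw [he i]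
    simp [Pi.single_apply]
  have hbcoord : ∀ j, b j = (n : ℝ)⁻¹ := by
    intro j
    rw [hb]
    have hs : (∑ i, e i) j = ∑ i, (e i) j := by
      rw [WithLp.ofLp_sum]; exact Finset.sum_apply j Finset.univ (fun i => (e i).ofLp)
    simp only [PiLp.smul_apply, hs, hcoord, smul_eq_mul]
    rw [Finset.sum_ite_eq Finset.univ j (fun _ => (1:ℝ))]
    simp
  have hmem : b ∈ convexHull ℝ (Set.range e) := by
    rw [hb, Finset.smul_sum]
    apply (convex_convexHull ℝ (Set.range e)).sum_mem
    · intro i _; positivity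
    · simp only [Finset.sum_const, Finset.card_univ, Fintype.card_fin, nsmul_eq_mul]
      field_simp
    · intro i _; exact subset_convexHull ℝ _ (Set.mem_range_self i)
  have hene : ∀ i, ‖e i‖ = 1 := by
    intro i
    rw [hnorm]
    simp only [hcoord, apply_ite abs, abs_one, abs_zero]
    rw [Finset.sum_ite_eq' Finset.univ i (fun _ => (1:ℝ))]
    simp
  have hdist : ∀ i, ‖b - e i‖ = 2 * ((n : ℝ) - 1) / n := by
    intro i
    rw [hnorm]
    have key : ∀ j, |(b - e i) j| = if j = i then 1 - (n : ℝ)⁻¹ else (n : ℝ)⁻¹ := by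
      intro j
      have h0 : (b - e i) j = b j - (e i) j := rfl
      rw [h0, hbcoord, hcoord]
      split
      · rw [abs_sub_comm, abs_of_nonneg (by linarith)]
      · rw [sub_zero, abs_of_nonneg (by positivity)]
    rw [Finset.sum_congr rfl (fun j _ => key j)]
    rw [Finset.sum_eq_add_sum_sdiff_singleton_of_mem (Finset.mem_univ i)]
    rw [if_pos rfl]
    rw [Finset.sum_congr rfl (fun j hj => if_neg (by simpa using (Finset.mem_sdiff.mp hj).2))]
    rw [Finset.sum_const]
    have hcard : (Finset.univ \ {i}).card = n - 1 := by
      rw [Finset.card_sdiff_of_subset (by simp)]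
      simp
    rw [hcard, nsmul_eq_mul]
    have : ((n - 1 : ℕ) : ℝ) = (n : ℝ) - 1 := by
      rw [Nat.cast_sub hn]; simp
    rw [this]
    field_simp
    ring
  refine ⟨hmem, hene, hdist, Set.range e, ?_, b, hmem, ?_⟩
  · intro x hx
    obtain ⟨i, rfl⟩ := hx
    simp [Metric.mem_closedBall, dist_zero_right, hene i]
  · have hne : (Set.range e).Nonempty := ⟨e ⟨0, hn⟩, Set.mem_range_self _⟩
    by_contra h
    push_neg at h
    obtain ⟨y, hy, hlt⟩ := (Metric.infDist_lt_iff hne).mp h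
    obtain ⟨i, rfl⟩ := hy
    rw [dist_eq_norm, hdist i] at hlt
    exact lt_irrefl _ hlt
end

section
/- In ℓ∞ⁿ (ℝⁿ with the maximum norm), n ≥ 2, let aᵢ be the vector whose j-th coordinate is (−1)^{δ_{ij}} (i.e., −1 in position i and +1 elsewhere), and let b = (1/n)(a₁ + ⋯ + aₙ). Then each aᵢ has sup-norm 1, b lies in the convex hull of {a₁,…,aₙ}, and ‖b − aᵢ‖_∞ = 2(n−1)/n for every i. Consequently the CHD-constant of ℓ∞ⁿ is at least 2(n−1)/n. -/
theorem stmt_3 (n : ℕ) (hn : 2 ≤ n)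
    (a : Fin n → (Fin n → ℝ))
    (ha : ∀ i j, a i j = if i = j then -1 else 1)
    (b : Fin n → ℝ) (hb : b = (n : ℝ)⁻¹ • ∑ i, a i) :
    (∀ i, ‖a i‖ = 1) ∧
    b ∈ convexHull ℝ (Set.range a) ∧
    (∀ i, ‖b - a i‖ = 2 * (n - 1) / n) ∧
    ∃ D ⊆ Metric.closedBall (0 : Fin n → ℝ) 1,
      ∃ y ∈ convexHull ℝ D, 2 * ((n : ℝ) - 1) / n ≤ Metric.infDist y D := by
  have hn2 : (2 : ℝ) ≤ (n : ℝ) := by exact_mod_cast hn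
  have hnpos : (0 : ℝ) < n := by linarith
  have hne : (Fin n) := ⟨0, by omega⟩
  -- value of b at each coordinate
  have hbval : ∀ j, b j = ((n : ℝ) - 2) / n := by
    intro j
    have hsum : (∑ i, a i j) = (n : ℝ) - 2 := by
      have h1 : ∀ i, a i j = 1 - 2 * (if i = j then (1 : ℝ) else 0) := by
        intro i; rw [ha]; by_cases h : i = j <;> simp [h] <;> norm_num
      calc (∑ i, a i j) = ∑ i : Fin n, (1 - 2 * (if i = j then (1:ℝ) else 0)) := by
              exact Finset.sum_congr rfl (fun i _ => h1 i)
        _ = (n : ℝ) - 2 := by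
              rw [Finset.sum_sub_distrib]
              simp [Finset.sum_ite_eq', mul_comm]
    have : b j = (n : ℝ)⁻¹ * (∑ i, a i j) := by
      rw [hb]; simp [Finset.sum_apply]
    rw [this, hsum]; ring
  -- norms of a i
  have hnorm : ∀ i, ‖a i‖ = 1 := by
    intro i
    apply le_antisymm
    · apply pi_norm_le_iff_of_nonneg (by norm_num) |>.mpr
      intro j
      rw [ha]
      by_cases h : i = j <;> simp [h]
    · have := norm_le_pi_norm (a i) i
      rw [ha] at this
      simpa using this
  -- norm of b - a i
  have hdist : ∀ i, ‖b - a i‖ = 2 * ((n : ℝ) - 1) / n := by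
    intro i
    have hc : (0 : ℝ) ≤ 2 * ((n : ℝ) - 1) / n := by
      apply div_nonneg _ (le_of_lt hnpos); linarith
    apply le_antisymm
    · apply pi_norm_le_iff_of_nonneg hc |>.mpr
      intro j
      simp only [Pi.sub_apply]
      rw [hbval, ha]
      by_cases h : i = j
      · rw [if_pos h]
        rw [show ((n:ℝ) - 2)/n - (-1) = 2 * ((n:ℝ) - 1) / n by field_simp; try ring]
        rw [Real.norm_eq_abs, abs_of_nonneg hc]
      · simp only [if_neg h]
        rw [show ((n:ℝ) - 2)/n - 1 = -(2/n) by field_simp; try ring]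
        rw [Real.norm_eq_abs, abs_neg, abs_of_nonneg (by positivity)]
        rw [div_le_div_iff₀ hnpos hnpos]
        nlinarith
    · have h := norm_le_pi_norm (b - a i) i
      simp only [Pi.sub_apply] at h
      rw [hbval, ha, if_pos rfl] at h
      rw [show ((n:ℝ) - 2)/n - (-1) = 2 * ((n:ℝ) - 1) / n by field_simp; try ring] at h
      rwa [Real.norm_eq_abs, abs_of_nonneg hc] at h
  -- b in convex hull
  have hmem : b ∈ convexHull ℝ (Set.range a) := by
    have := Finset.centerMass_mem_convexHull (t := (Finset.univ : Finset (Fin n)))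
      (w := fun _ => (1 : ℝ)) (z := a) (s := Set.range a)
      (fun i _ => zero_le_one)
      (by simpa using hnpos)
      (fun i _ => Set.mem_range_self i)
    rw [Finset.centerMass] at this
    simpa [hb, Finset.card_univ] using this
  refine ⟨hnorm, hmem, hdist, Set.range a, ?_, b, hmem, ?_⟩
  · rintro x ⟨i, rfl⟩
    simp [Metric.mem_closedBall, dist_eq_norm, hnorm i]
  · rw [Metric.infDist_eq_iInf]
    have : Nonempty (Set.range a) := ⟨⟨a hne, Set.mem_range_self hne⟩⟩
    apply le_ciInf
    rintro ⟨z, i, rfl⟩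
    rw [dist_eq_norm, hdist i]
end

section
/- In a real Hilbert space H, for every subset D of the closed unit ball and every point y in the convex hull of D, the distance from y to D is at most 1; that is, the CHD-constant of H equals 1. -/
theorem stmt_5 {H : Type*} [NormedAddCommGroup H] [InnerProductSpace ℝ H]
    (D : Set H) (hD : D ⊆ Metric.closedBall 0 1)
    (y : H) (hy : y ∈ convexHull ℝ D) :
    Metric.infDist y D ≤ 1 := by
  rw [convexHull_eq] at hy
  obtain ⟨ι, t, w, z, hw₀, hw₁, hz, hyc⟩ := hy
  have hysum : y = ∑ i ∈ t, w i • z i := by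
    rw [← hyc, Finset.centerMass_eq_of_sum_1 _ _ hw₁]
  -- key identity
  have key : ∑ i ∈ t, w i * ‖y - z i‖ ^ 2 ≤ 1 := by
    have expand : ∀ i, ‖y - z i‖ ^ 2
        = ‖y‖ ^ 2 - 2 * inner ℝ y (z i) + ‖z i‖ ^ 2 := by
      intro i
      rw [norm_sub_sq_real]
    calc ∑ i ∈ t, w i * ‖y - z i‖ ^ 2
        = ∑ i ∈ t, (w i * ‖y‖ ^ 2 - 2 * (w i * inner ℝ y (z i)) + w i * ‖z i‖ ^ 2) := by
          refine Finset.sum_congr rfl fun i _ => ?_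
          rw [expand i]; ring
      _ = ‖y‖ ^ 2 - 2 * inner ℝ y y + ∑ i ∈ t, w i * ‖z i‖ ^ 2 := by
          rw [Finset.sum_add_distrib, Finset.sum_sub_distrib, ← Finset.sum_mul, hw₁,
            ← Finset.mul_sum]
          congr 2
          · ring
          · congr 1
            rw [hysum, inner_sum]
            refine Finset.sum_congr rfl fun i _ => ?_
            rw [real_inner_smul_right]
      _ = ∑ i ∈ t, w i * ‖z i‖ ^ 2 - ‖y‖ ^ 2 := by
          rw [real_inner_self_eq_norm_sq]; ring
      _ ≤ 1 - ‖y‖ ^ 2 := by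
          gcongr
          have : ∑ i ∈ t, w i * ‖z i‖ ^ 2 ≤ ∑ i ∈ t, w i * 1 := by
            refine Finset.sum_le_sum fun i hi => ?_
            have hzi := hD (hz i hi)
            rw [Metric.mem_closedBall, dist_zero_right] at hzi
            have : ‖z i‖ ^ 2 ≤ 1 := by nlinarith [norm_nonneg (z i)]
            exact mul_le_mul_of_nonneg_left (by linarith) (hw₀ i hi)
          simpa [hw₁] using this
      _ ≤ 1 := by nlinarith [sq_nonneg ‖y‖]
  by_contra h
  push_neg at h
  have h1 : (1:ℝ) < Metric.infDist y D := h
  have hbound : ∀ i ∈ t, w i * 1 ≤ w i * ‖y - z i‖ ^ 2 := by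
    intro i hi
    have hd : Metric.infDist y D ≤ ‖y - z i‖ := by
      rw [← dist_eq_norm]
      exact Metric.infDist_le_dist_of_mem (hz i hi)
    have : (1:ℝ) ≤ ‖y - z i‖ ^ 2 := by nlinarith [Metric.infDist_nonneg (x := y) (s := D)]
    exact mul_le_mul_of_nonneg_left this (hw₀ i hi)
  have : (1:ℝ) ≤ ∑ i ∈ t, w i * ‖y - z i‖ ^ 2 := by
    calc (1:ℝ) = ∑ i ∈ t, w i * 1 := by rw [← Finset.sum_mul, hw₁, one_mul]
      _ ≤ _ := Finset.sum_le_sum hbound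
  -- strengthen: exists i with w i positive
  have hpos : ∃ i ∈ t, 0 < w i := by
    by_contra hc
    push_neg at hc
    have : ∑ i ∈ t, w i = 0 :=
      Finset.sum_eq_zero fun i hi => le_antisymm (hc i hi) (hw₀ i hi)
    rw [hw₁] at this; norm_num at this
  obtain ⟨j, hjt, hjw⟩ := hpos
  have hstrict : ∑ i ∈ t, w i * 1 < ∑ i ∈ t, w i * ‖y - z i‖ ^ 2 := by
    refine Finset.sum_lt_sum hbound ⟨j, hjt, ?_⟩
    have hd : Metric.infDist y D ≤ ‖y - z j‖ := by
      rw [← dist_eq_norm]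
      exact Metric.infDist_le_dist_of_mem (hz j hjt)
    have : (1:ℝ) < ‖y - z j‖ ^ 2 := by nlinarith [Metric.infDist_nonneg (x := y) (s := D)]
    exact mul_lt_mul_of_pos_left this hjw
  rw [← Finset.sum_mul, hw₁, one_mul] at hstrict
  linarith
end

section
/- Let X be a Banach space and let (Xₙ) be an increasing sequence of finite-dimensional subspaces Xₙ = span{x₁,…,xₙ} whose union is dense in X. Then the CHD-constant of X equals the limit of the CHD-constants of Xₙ: ζ_X = limₙ ζ_{Xₙ}, and moreover the sequence (ζ_{Xₙ}) is monotone nondecreasing. -/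
open Metric Set Filter

/-- The CHD-constant of a normed space. -/
noncomputable def chd (Y : Type*) [NormedAddCommGroup Y] [NormedSpace ℝ Y] : ℝ :=
  sSup {d : ℝ | ∃ D ⊆ Metric.closedBall (0 : Y) 1,
    ∃ y ∈ convexHull ℝ D, d = Metric.infDist y D}

section helpers

variable (Y : Type*) [NormedAddCommGroup Y] [NormedSpace ℝ Y]

def chdSet : Set ℝ :=
  {d : ℝ | ∃ D ⊆ Metric.closedBall (0 : Y) 1,
    ∃ y ∈ convexHull ℝ D, d = Metric.infDist y D}

lemma chd_eq : chd Y = sSup (chdSet Y) := rfl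

variable {Y}

lemma chdSet_zero_mem : (0 : ℝ) ∈ chdSet Y := by
  refine ⟨{0}, by simp, 0, by simp [convexHull_singleton], by simp [Metric.infDist_singleton]⟩

lemma chdSet_le_two {d : ℝ} (hd : d ∈ chdSet Y) : d ≤ 2 := by
  obtain ⟨D, hD, y, hy, rfl⟩ := hd
  have hDne : D.Nonempty := by
    by_contra h
    rw [Set.not_nonempty_iff_eq_empty] at h
    simp [h] at hy
  obtain ⟨z, hzD⟩ := hDne
  have hyB : y ∈ closedBall (0 : Y) 1 := convexHull_min hD (convex_closedBall _ _) hy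
  calc Metric.infDist y D ≤ dist y z := Metric.infDist_le_dist_of_mem hzD
    _ ≤ ‖y‖ + ‖z‖ := by rw [dist_eq_norm]; exact norm_sub_le _ _
    _ ≤ 1 + 1 := add_le_add (mem_closedBall_zero_iff.mp hyB)
        (mem_closedBall_zero_iff.mp (hD hzD))
    _ = 2 := by norm_num

lemma chdSet_bddAbove : BddAbove (chdSet Y) := ⟨2, fun _ hd => chdSet_le_two hd⟩

lemma chd_le_two : chd Y ≤ 2 := csSup_le ⟨0, chdSet_zero_mem⟩ fun _ => chdSet_le_two

lemma chd_le_of_li {Z : Type*} [NormedAddCommGroup Z] [NormedSpace ℝ Z]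
    (f : Y →ₗᵢ[ℝ] Z) : chd Y ≤ chd Z := by
  rw [chd_eq, chd_eq]
  refine csSup_le_csSup chdSet_bddAbove ⟨0, chdSet_zero_mem⟩ ?_
  rintro d ⟨D, hD, y, hy, rfl⟩
  refine ⟨f '' D, ?_, f y, ?_, ?_⟩
  · rintro _ ⟨p, hp, rfl⟩
    simpa [mem_closedBall_zero_iff, f.norm_map] using mem_closedBall_zero_iff.mp (hD hp)
  · have h := f.toLinearMap.image_convexHull D
    simp only [LinearIsometry.coe_toLinearMap] at h
    rw [← h]
    exact mem_image_of_mem _ hy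
  · exact (Metric.infDist_image f.isometry).symm

def inclusionₗᵢ {X : Type*} [NormedAddCommGroup X] [NormedSpace ℝ X]
    {p q : Submodule ℝ X} (h : p ≤ q) : p →ₗᵢ[ℝ] q :=
  ⟨Submodule.inclusion h, fun _ => rfl⟩

end helpers

theorem stmt_8 {X : Type*} [NormedAddCommGroup X] [NormedSpace ℝ X] [CompleteSpace X]
    (x : ℕ → X)
    (hdense : Dense (↑(Submodule.span ℝ (Set.range x)) : Set X)) :
    Monotone (fun n => chd (Submodule.span ℝ (x '' Set.Iio n))) ∧
    Filter.Tendsto (fun n => chd (Submodule.span ℝ (x '' Set.Iio n)))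
      Filter.atTop (nhds (chd X)) := by
  set V : ℕ → Submodule ℝ X := fun n => Submodule.span ℝ (x '' Set.Iio n) with hV
  have hVmono : Monotone V := fun a b h =>
    Submodule.span_mono (Set.image_mono (Set.Iio_subset_Iio h))
  have hmono : Monotone (fun n => chd (V n)) := fun a b h => chd_le_of_li (inclusionₗᵢ (hVmono h))
  have hbdd : BddAbove (Set.range fun n => chd (V n)) := by
    refine ⟨2, ?_⟩
    rintro r ⟨n, rfl⟩
    exact chd_le_two
  refine ⟨hmono, ?_⟩
  have hsup : Submodule.span ℝ (Set.range x) = ⨆ n, V n := by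
    apply le_antisymm
    · rw [Submodule.span_le]
      rintro _ ⟨j, rfl⟩
      exact Submodule.mem_iSup_of_mem (j + 1)
        (Submodule.subset_span ⟨j, by simp, rfl⟩)
    · exact iSup_le fun n => Submodule.span_mono (Set.image_subset_range _ _)
  -- key approximation step
  have key : ∀ d ∈ chdSet X, ∀ ε : ℝ, 0 < ε → ∃ n, d ≤ chd (V n) + ε := by
    rintro d ⟨D, hD, y, hy, rfl⟩ ε hε
    classical
    set δ : ℝ := ε / 4 with hδdef
    have hδ : 0 < δ := by positivity
    rw [convexHull_eq] at hy
    obtain ⟨ι, t, w, z, hw0, hw1, hz, hcm⟩ := hy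
    have htne : t.Nonempty := Finset.nonempty_of_sum_ne_zero (by rw [hw1]; norm_num)
    -- approximate each z i by elements of the span
    have h1 : ∀ i : ι, ∃ b : X, b ∈ (Submodule.span ℝ (Set.range x) : Set X) ∧
        dist (z i) b < δ := fun i => by
      have := hdense (z i)
      rw [Metric.mem_closure_iff] at this
      obtain ⟨b, hb, hbd⟩ := this δ hδ
      exact ⟨b, hb, hbd⟩
    choose z' hz'S hz'd using h1
    have h2 : ∀ i : ι, ∃ n, z' i ∈ V n := fun i => by
      have := hz'S i
      rw [SetLike.mem_coe, hsup, Submodule.mem_iSup_of_directed _ hVmono.directed_le] at this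
      exact this
    choose N hN using h2
    set n0 := t.sup N with hn0
    set c : ℝ := (1 + δ)⁻¹ with hc
    have hc0 : 0 ≤ c := by positivity
    have hc1 : c ≤ 1 := by
      rw [hc]; rw [inv_le_one_iff₀]; right; linarith
    have hmem : ∀ i ∈ t, c • z' i ∈ V n0 := fun i hi =>
      (V n0).smul_mem c (hVmono (Finset.le_sup hi) (hN i))
    set Z : ι → V n0 := fun i => if h : i ∈ t then ⟨c • z' i, hmem i h⟩ else 0 with hZ
    have hZcoe : ∀ i ∈ t, (Z i : X) = c • z' i := fun i hi => by simp [hZ, hi]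
    -- norm bounds
    have hz'le : ∀ i ∈ t, ‖z' i‖ ≤ 1 + δ := by
      intro i hi
      have h1le : ‖z i‖ ≤ 1 := mem_closedBall_zero_iff.mp (hD (hz i hi))
      have : ‖z' i‖ - ‖z i‖ ≤ dist (z i) (z' i) := by
        rw [dist_comm, dist_eq_norm]
        exact (norm_sub_norm_le _ _).trans (le_refl _)
      linarith [le_of_lt (hz'd i)]
    have hZnorm : ∀ i ∈ t, ‖(Z i : X)‖ ≤ 1 := by
      intro i hi
      rw [hZcoe i hi, norm_smul, Real.norm_eq_abs, abs_of_nonneg hc0]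
      calc c * ‖z' i‖ ≤ c * (1 + δ) := by
            exact mul_le_mul_of_nonneg_left (hz'le i hi) hc0
        _ = 1 := by rw [hc]; field_simp
    have hZdist : ∀ i ∈ t, dist (z i) (Z i : X) ≤ 2 * δ := by
      intro i hi
      rw [hZcoe i hi]
      have h2 : dist (z' i) (c • z' i) ≤ δ := by
        rw [dist_eq_norm]
        have : z' i - c • z' i = (1 - c) • z' i := by
          rw [sub_smul, one_smul]
        rw [this, norm_smul, Real.norm_eq_abs, abs_of_nonneg (by linarith)]
        have h1c : 1 - c = δ / (1 + δ) := by
          rw [hc]; field_simp; ring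
        rw [h1c]
        calc δ / (1 + δ) * ‖z' i‖ ≤ δ / (1 + δ) * (1 + δ) := by
              apply mul_le_mul_of_nonneg_left (hz'le i hi); positivity
          _ = δ := by field_simp
      calc dist (z i) (c • z' i) ≤ dist (z i) (z' i) + dist (z' i) (c • z' i) :=
            dist_triangle _ _ _
        _ ≤ δ + δ := add_le_add (le_of_lt (hz'd i)) h2
        _ = 2 * δ := by ring
    -- the center of mass inside the submodule
    set yV : V n0 := t.centerMass w Z with hyV
    have hyVcoe : (yV : X) = ∑ i ∈ t, w i • (Z i : X) := by
      rw [hyV, Finset.centerMass_eq_of_sum_1 _ _ hw1]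
      push_cast
      rfl
    have hycoe : y = ∑ i ∈ t, w i • z i := by
      rw [← hcm, Finset.centerMass_eq_of_sum_1 _ _ hw1]
    have hydist : dist y (yV : X) ≤ 2 * δ := by
      rw [dist_eq_norm, hycoe, hyVcoe, ← Finset.sum_sub_distrib]
      have heq : ∀ i ∈ t, w i • z i - w i • (Z i : X) = w i • (z i - (Z i : X)) :=
        fun i _ => (smul_sub _ _ _).symm
      rw [Finset.sum_congr rfl heq]
      calc ‖∑ i ∈ t, w i • (z i - (Z i : X))‖ ≤ ∑ i ∈ t, ‖w i • (z i - (Z i : X))‖ :=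
            norm_sum_le _ _
        _ ≤ ∑ i ∈ t, w i * (2 * δ) := by
            refine Finset.sum_le_sum fun i hi => ?_
            rw [norm_smul, Real.norm_eq_abs, abs_of_nonneg (hw0 i hi)]
            exact mul_le_mul_of_nonneg_left (by rw [← dist_eq_norm]; exact hZdist i hi)
              (hw0 i hi)
        _ = 2 * δ := by rw [← Finset.sum_mul, hw1, one_mul]
    set D'' : Set (V n0) := Z '' ↑t with hD''
    have hD''ball : D'' ⊆ Metric.closedBall (0 : V n0) 1 := by
      rintro _ ⟨i, hi, rfl⟩
      rw [mem_closedBall_zero_iff]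
      exact hZnorm i hi
    have hyVmem : yV ∈ convexHull ℝ D'' := by
      rw [hyV]
      exact Finset.centerMass_mem_convexHull t hw0 (by rw [hw1]; norm_num)
        (fun i hi => Set.mem_image_of_mem _ hi)
    have hinf : Metric.infDist y D - ε ≤ Metric.infDist yV D'' := by
      haveI hne : Nonempty ↥D'' := by
        obtain ⟨i, hi⟩ := htne
        exact ⟨⟨Z i, Set.mem_image_of_mem _ hi⟩⟩
      rw [show Metric.infDist yV D'' = ⨅ p : ↥D'', dist yV ↑p from Metric.infDist_eq_iInf]
      apply le_ciInf
      rintro ⟨q, hq⟩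
      obtain ⟨i, hi, rfl⟩ := hq
      have hdq : dist yV (Z i) = dist (yV : X) (Z i : X) := rfl
      have h3 : Metric.infDist y D ≤ dist y (z i) := Metric.infDist_le_dist_of_mem (hz i hi)
      have h4 : dist y (z i) ≤ dist y (yV : X) + dist (yV : X) (Z i : X) + dist (Z i : X) (z i) :=
        dist_triangle4 _ _ _ _
      have h5 : dist (Z i : X) (z i) ≤ 2 * δ := by rw [dist_comm]; exact hZdist i hi
      show Metric.infDist y D - ε ≤ dist yV (⟨Z i, _⟩ : ↥D'')
      have : dist yV (⟨Z i, Set.mem_image_of_mem _ hi⟩ : ↥D'') = dist (yV : X) (Z i : X) := rfl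
      rw [this]
      have : ε = 4 * δ := by rw [hδdef]; ring
      linarith
    have hmemV : Metric.infDist yV D'' ∈ chdSet (V n0) := ⟨D'', hD''ball, yV, hyVmem, rfl⟩
    refine ⟨n0, ?_⟩
    have := le_csSup (chdSet_bddAbove (Y := V n0)) hmemV
    rw [← chd_eq] at this
    linarith
  -- conclude
  have hle : ∀ n, chd (V n) ≤ chd X := fun n =>
    chd_le_of_li (Submodule.subtypeₗᵢ (V n))
  have heq : chd X = ⨆ n, chd (V n) := by
    apply le_antisymm
    · rw [chd_eq]
      refine csSup_le ⟨0, chdSet_zero_mem⟩ fun d hd => ?_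
      refine le_of_forall_pos_le_add fun ε hε => ?_
      obtain ⟨n, hn⟩ := key d hd ε hε
      exact hn.trans (add_le_add_left (le_ciSup hbdd n) ε)
    · exact ciSup_le hle
  rw [heq]
  exact tendsto_atTop_ciSup hmono hbdd
end

section
/- For every p ∈ (1, ∞), the CHD-constant of L_p satisfies ζ_{L_p} ≤ 2^{|1/p − 1/p'|}, where 1/p + 1/p' = 1. That is, for any finite set of points x₁,…,x_k in the unit ball of L_p and any convex combination x₀ = Σ αᵢ xᵢ, there is some index i with ‖x₀ − xᵢ‖_p ≤ 2^{|1/p − 1/p'|}. -/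
open Real Set
open scoped ENNReal

lemma midpt_strict {q u : ℝ} (hq : 1 < q) (hu : 1 < u) :
    (1 + u) ^ q < 2 ^ (q - 1) * (1 + u ^ q) := by
  have h := (strictConvexOn_rpow hq).2 (mem_Ici.2 (by norm_num : (0:ℝ) ≤ 1))
    (mem_Ici.2 (by positivity : (0:ℝ) ≤ u)) (by linarith) (by norm_num : (0:ℝ) < 1/2)
    (by norm_num : (0:ℝ) < 1/2) (by norm_num)
  simp only [smul_eq_mul] at h
  have h2 : ((1 + u)/2) ^ q < (1 + u ^ q)/2 := by
    have e1 : (1/2 : ℝ) * (1:ℝ) + (1/2 : ℝ) * u = (1 + u)/2 := by ring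
    have e2 : (1/2 : ℝ) * (1:ℝ) ^ q + (1/2 : ℝ) * u ^ q = (1 + u ^ q)/2 := by
      rw [Real.one_rpow]; ring
    rw [e1, e2] at h; exact h
  have e3 : ((1 + u)/2) ^ q = (1+u) ^ q / 2 ^ q :=
    Real.div_rpow (by linarith) (by norm_num) q
  rw [e3] at h2
  have h2q : (0:ℝ) < (2:ℝ) ^ q := Real.rpow_pos_of_pos (by norm_num) q
  have h4 : (1+u) ^ q < 2 ^ q * ((1 + u ^ q)/2) := by
    rw [div_lt_iff₀ h2q] at h2; linarith [h2]
  calc (1+u) ^ q < 2 ^ q * ((1 + u ^ q)/2) := h4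
    _ = 2 ^ (q - 1) * (1 + u ^ q) := by
        rw [Real.rpow_sub (by norm_num : (0:ℝ) < 2), Real.rpow_one]; ring

section Branches

variable {P : ℝ} (hP : 2 < P)

private lemma Kpos : (0:ℝ) < 2 ^ (P-2) := Real.rpow_pos_of_pos (by norm_num) _

private lemma oneLtK (hP : 2 < P) : (1:ℝ) < 2 ^ (P-2) :=
  Real.one_lt_rpow_iff_of_pos (by norm_num) |>.2 (Or.inl ⟨by norm_num, by linarith⟩)

-- derivative helpers
private lemma hasDeriv_one_add (P : ℝ) (s : ℝ) (h : (0:ℝ) < 1 + s) :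
    HasDerivAt (fun x : ℝ => (1+x) ^ P) (P * (1+s) ^ (P-1)) s := by
  have h1 : HasDerivAt (fun x : ℝ => 1 + x) 1 s := (hasDerivAt_id s).const_add 1
  have h2 := (Real.hasDerivAt_rpow_const (x := 1+s) (p := P) (Or.inl h.ne')).comp s h1
  exact h2.congr_deriv (by ring)

-- Branch B : t ≥ 1.  G s = K(1+s)^P - s^P - PKs ≥ 0 for s ≥ 0.
lemma branchB (hP : 2 < P) {s : ℝ} (hs : 0 ≤ s) :
    s ^ P + P * 2 ^ (P-2) * s ≤ 2 ^ (P-2) * (1+s) ^ P := by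
  set K := (2:ℝ) ^ (P-2) with hK
  have hK1 : 1 < K := oneLtK hP
  have hK0 : 0 < K := by linarith
  set G : ℝ → ℝ := fun x => K * (1+x) ^ P - x ^ P - P * K * x with hG
  -- direct bound for large s
  have direct : ∀ x : ℝ, 1 ≤ x → P * K / (K - 1) ≤ x → 0 ≤ G x := by
    intro x hx1 hx2
    have hx0 : (0:ℝ) ≤ x := by linarith
    have hA : x ^ P ≤ (1+x) ^ P := Real.rpow_le_rpow hx0 (by linarith) (by linarith)
    have hB : x ^ P = x ^ (P-1) * x := by
      rw [← Real.rpow_add_one (by positivity : x ≠ 0) (P-1)]; ring_nf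
    have hC : x ≤ x ^ (P-1) := by
      calc x = x ^ (1:ℝ) := (Real.rpow_one x).symm
        _ ≤ x ^ (P-1) := Real.rpow_le_rpow_of_exponent_le hx1 (by linarith)
    have hD : P * K ≤ (K-1) * x := by
      rw [div_le_iff₀ (by linarith : (0:ℝ) < K - 1)] at hx2; linarith
    have hxP1 : 0 ≤ x ^ (P-1) := Real.rpow_nonneg hx0 _
    simp only [hG]
    nlinarith [mul_le_mul_of_nonneg_left hA (le_of_lt hK0),
      mul_le_mul_of_nonneg_right hC hx0]
  -- continuity
  have contG : Continuous G := by
    have c1 : Continuous fun x : ℝ => (1+x) ^ P := by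
      rw [continuous_iff_continuousAt]
      intro x
      exact (Real.continuousAt_rpow_const (1+x) P (Or.inr (by linarith))).comp
        ((continuous_const.add continuous_id).continuousAt)
    have c2 : Continuous fun x : ℝ => x ^ P := by
      rw [continuous_iff_continuousAt]
      intro x
      exact Real.continuousAt_rpow_const x P (Or.inr (by linarith))
    exact ((continuous_const.mul c1).sub c2).sub (continuous_const.mul continuous_id)
  set S : ℝ := max 1 (P * K / (K-1)) + 1 with hS
  have hS1 : 1 ≤ S := by
    have := le_max_left 1 (P * K / (K-1)); simp only [hS]; linarith
  have hSbig : P * K / (K-1) ≤ S := by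
    have := le_max_right 1 (P * K / (K-1)); simp only [hS]; linarith
  -- min on [0,S]
  have hmain : ∀ x ∈ Icc (0:ℝ) S, 0 ≤ G x := by
    obtain ⟨m, hmI, hmin⟩ := (isCompact_Icc (a := (0:ℝ)) (b := S)).exists_isMinOn
      ⟨0, by constructor <;> [rfl; linarith]⟩ contG.continuousOn
    intro x hx
    have hGm : 0 ≤ G m := by
      rcases eq_or_lt_of_le hmI.1 with h0 | h0pos
      · -- m = 0
        simp only [hG, ← h0]
        rw [Real.zero_rpow (by linarith : P ≠ 0)]
        simp only [add_zero, Real.one_rpow, mul_zero, mul_one]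
        linarith
      · rcases eq_or_lt_of_le hmI.2 with hS0 | hmS
        · exact direct m (by rw [hS0]; exact hS1) (by rw [hS0]; exact hSbig)
        · -- interior critical point
          have hloc : IsLocalMin G m := hmin.isLocalMin (Icc_mem_nhds h0pos hmS)
          have hder : HasDerivAt G (P * K * (1+m) ^ (P-1) - P * m ^ (P-1) - P * K) m := by
            have h1 := (hasDeriv_one_add P m (by linarith)).const_mul K
            have h2 : HasDerivAt (fun x : ℝ => x ^ P) (P * m ^ (P-1)) m :=
              Real.hasDerivAt_rpow_const (Or.inl h0pos.ne')
            have h3 : HasDerivAt (fun x : ℝ => P * K * x) (P * K) m := by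
              simpa using (hasDerivAt_id m).const_mul (P*K)
            have := (h1.sub h2).sub h3
            exact this.congr_deriv (by ring)
          have hzero := hloc.hasDerivAt_eq_zero hder
          have hcrit : m ^ (P-1) = K * (1+m) ^ (P-1) - K := by
            have h4 : P * (K * (1+m) ^ (P-1) - m ^ (P-1) - K) = 0 := by linarith [hzero]
            rcases mul_eq_zero.mp h4 with h5 | h5
            · exfalso; linarith
            · linarith
          -- value at critical point
          have hbern : 1 + (P-1) * m ≤ (1+m) ^ (P-1) :=
            one_add_mul_self_le_rpow_one_add (by linarith) (by linarith)
          have hmP : m ^ P = m ^ (P-1) * m := by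
            rw [← Real.rpow_add_one h0pos.ne' (P-1)]; ring_nf
          have h1mP : (1+m) ^ P = (1+m) ^ (P-1) * (1+m) := by
            rw [← Real.rpow_add_one (by linarith : (1:ℝ)+m ≠ 0) (P-1)]; ring_nf
          simp only [hG]
          rw [hmP, h1mP, hcrit]
          nlinarith [hK0, h0pos]
    exact le_trans hGm (hmin hx)
  -- conclude
  have : 0 ≤ G s := by
    rcases le_or_gt s S with h | h
    · exact hmain s ⟨hs, h⟩
    · exact direct s (le_trans hS1 h.le) (le_trans hSbig h.le)
  simp only [hG] at this; linarith

end Branches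
-- Branch C : t ≤ -1.  (1+u)^P ≤ K u^P + PK(1+u) for u ≥ 1.
lemma branchC {P : ℝ} (hP : 2 < P) {u : ℝ} (hu : 1 ≤ u) :
    (1+u) ^ P ≤ 2 ^ (P-2) * u ^ P + P * 2 ^ (P-2) * (1+u) := by
  set K := (2:ℝ) ^ (P-2) with hK
  have hK1 : 1 < K := oneLtK hP
  have hK0 : 0 < K := by linarith
  have hP0 : (0:ℝ) < P := by linarith
  set c : ℝ := 2 ^ ((P-2)/P) with hc
  have hc1 : 1 < c :=
    Real.one_lt_rpow_iff_of_pos (by norm_num) |>.2 (Or.inl ⟨by norm_num, div_pos (by linarith) (by linarith)⟩)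
  have hcP : c ^ P = K := by
    rw [hc, hK, ← Real.rpow_mul (by norm_num : (0:ℝ) ≤ 2)]
    congr 1
    field_simp
  -- direct regime : 1/(c-1) ≤ x
  have direct : ∀ x : ℝ, 0 ≤ x → 1/(c-1) ≤ x → (1+x) ^ P ≤ K * x ^ P + P * K * (1+x) := by
    intro x hx0 hx
    have h1 : 1 + x ≤ c * x := by
      rw [div_le_iff₀ (by linarith : (0:ℝ) < c - 1)] at hx
      nlinarith
    have h2 : (1+x) ^ P ≤ (c*x) ^ P :=
      Real.rpow_le_rpow (by linarith) h1 (by linarith)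
    have h3 : (c*x) ^ P = c ^ P * x ^ P := Real.mul_rpow (by linarith) hx0
    have h4 : 0 ≤ P * K * (1+x) := by positivity
    calc (1+x) ^ P ≤ (c*x) ^ P := h2
      _ = K * x ^ P := by rw [h3, hcP]
      _ ≤ K * x ^ P + P * K * (1+x) := by linarith
  set H : ℝ → ℝ := fun x => K * x ^ P + P * K * (1+x) - (1+x) ^ P with hH
  have contH : Continuous H := by
    have c1 : Continuous fun x : ℝ => (1+x) ^ P := by
      rw [continuous_iff_continuousAt]
      intro x
      exact (Real.continuousAt_rpow_const (1+x) P (Or.inr (by linarith))).comp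
        ((continuous_const.add continuous_id).continuousAt)
    have c2 : Continuous fun x : ℝ => x ^ P := by
      rw [continuous_iff_continuousAt]
      intro x
      exact Real.continuousAt_rpow_const x P (Or.inr (by linarith))
    exact ((continuous_const.mul c2).add
      (continuous_const.mul (continuous_const.add continuous_id))).sub c1
  set S : ℝ := max 1 (1/(c-1)) + 1 with hS
  have hS1 : 1 ≤ S := by
    have := le_max_left 1 (1/(c-1)); simp only [hS]; linarith
  have hSbig : 1/(c-1) ≤ S := by
    have := le_max_right 1 (1/(c-1)); simp only [hS]; linarith
  have hmain : ∀ x ∈ Icc (1:ℝ) S, 0 ≤ H x := by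
    obtain ⟨m, hmI, hmin⟩ := (isCompact_Icc (a := (1:ℝ)) (b := S)).exists_isMinOn
      ⟨1, by constructor <;> [rfl; linarith]⟩ contH.continuousOn
    intro x hx
    have hHm : 0 ≤ H m := by
      rcases eq_or_lt_of_le hmI.1 with h1m | h1m
      · -- m = 1
        simp only [hH, ← h1m]
        rw [Real.one_rpow]
        have e2 : ((1:ℝ)+1) ^ P = K * 4 := by
          norm_num
          rw [show P = (P-2) + 2 by ring, Real.rpow_add (by norm_num : (0:ℝ) < 2)]
          norm_num
          exact hK.symm
        rw [e2]
        nlinarith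
      · rcases eq_or_lt_of_le hmI.2 with hmS | hmS
        · have := direct m (by linarith) (by rw [hmS]; exact hSbig)
          simp only [hH]; linarith
        · -- interior: contradiction with strict convexity
          exfalso
          have hm0 : (0:ℝ) < m := by linarith
          have hloc : IsLocalMin H m := hmin.isLocalMin (Icc_mem_nhds h1m hmS)
          have hder : HasDerivAt H (P * K * m ^ (P-1) + P * K - P * (1+m) ^ (P-1)) m := by
            have h1 : HasDerivAt (fun x : ℝ => x ^ P) (P * m ^ (P-1)) m :=
              Real.hasDerivAt_rpow_const (Or.inl hm0.ne')
            have h2 := hasDeriv_one_add P m (by linarith)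
            have h3 : HasDerivAt (fun x : ℝ => P * K * (1+x)) (P * K) m := by
              simpa using ((hasDerivAt_id m).const_add 1).const_mul (P*K)
            have := ((h1.const_mul K).add h3).sub h2
            exact this.congr_deriv (by ring)
          have hzero := hloc.hasDerivAt_eq_zero hder
          have hcrit : (1+m) ^ (P-1) = K * (1 + m ^ (P-1)) := by
            have h4 : P * (K * m ^ (P-1) + K - (1+m) ^ (P-1)) = 0 := by linarith [hzero]
            rcases mul_eq_zero.mp h4 with h5 | h5
            · linarith
            · linarith
          have hstrict := midpt_strict (q := P-1) (u := m) (by linarith) h1m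
          rw [show P - 1 - 1 = P - 2 by ring] at hstrict
          rw [hcrit] at hstrict
          simp only [← hK] at hstrict
          linarith
    exact le_trans hHm (hmin hx)
  rcases le_or_gt u S with h | h
  · have := hmain u ⟨hu, h⟩; simp only [hH] at this; linarith
  · exact direct u (by linarith) (le_trans hSbig h.le)

-- the key pointwise inequality, P ≥ 2
lemma scalar_key {P : ℝ} (hP2 : 2 ≤ P) (t : ℝ) :
    |t - 1| ^ P + P * 2 ^ (P-2) * (t - 1) ≤ 2 ^ (P-2) * |t| ^ P := by
  rcases eq_or_lt_of_le hP2 with hPeq | hP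
  · -- P = 2
    subst hPeq
    have habs : ∀ a : ℝ, |a| ^ (2:ℝ) = a ^ 2 := fun a => by
      rw [show (2:ℝ) = ((2:ℕ):ℝ) by norm_num, Real.rpow_natCast, sq_abs]
    rw [habs, habs]
    norm_num
    nlinarith [sq_nonneg (t-1)]
  have hK0 : (0:ℝ) < 2 ^ (P-2) := Kpos
  have hK1 : (1:ℝ) < 2 ^ (P-2) := oneLtK hP
  rcases le_or_gt t (-1) with hc | hc
  · -- t ≤ -1
    set u : ℝ := -t with hu
    have hu1 : 1 ≤ u := by simp only [hu]; linarith
    have e1 : |t - 1| = 1 + u := by rw [abs_of_nonpos (by linarith)]; simp only [hu]; ring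
    have e2 : |t| = u := by rw [abs_of_nonpos (by linarith)]
    have e3 : t - 1 = -(1+u) := by simp [hu]; ring
    rw [e1, e2, e3]
    have := branchC hP hu1
    nlinarith [this]
  rcases le_or_gt t 1 with hd | hd
  · -- -1 ≤ t ≤ 1
    have e1 : |t - 1| = 1 - t := by rw [abs_of_nonpos (by linarith)]; ring
    rw [e1]
    have h1t : 0 ≤ 1 - t := by linarith
    have hbound : (1-t) ^ P ≤ 2 ^ (P-1) * (1-t) := by
      rcases eq_or_lt_of_le h1t with h0 | h0
      · rw [← h0, Real.zero_rpow (by linarith : P ≠ 0)]; simp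
      · have e2 : (1-t) ^ P = (1-t) ^ (P-1) * (1-t) := by
          rw [← Real.rpow_add_one h0.ne' (P-1)]; ring_nf
        rw [e2]
        have h3 : (1-t) ^ (P-1) ≤ 2 ^ (P-1) :=
          Real.rpow_le_rpow (by linarith) (by linarith) (by linarith)
        nlinarith
    have e4 : (2:ℝ) ^ (P-1) = 2 * 2 ^ (P-2) := by
      rw [show P - 1 = 1 + (P-2) by ring, Real.rpow_add (by norm_num : (0:ℝ) < 2),
        Real.rpow_one]
    have h5 : 0 ≤ |t| ^ P := Real.rpow_nonneg (abs_nonneg t) P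
    rw [e4] at hbound
    have h6 : 0 ≤ (P-2) * 2 ^ (P-2) * (1-t) :=
      mul_nonneg (mul_nonneg (by linarith) hK0.le) h1t
    have h7 : 0 ≤ 2 ^ (P-2) * |t| ^ P := mul_nonneg hK0.le h5
    nlinarith [hbound, h6, h7]
  · -- t > 1
    set s : ℝ := t - 1 with hs
    have hs0 : 0 ≤ s := by simp only [hs]; linarith
    have e1 : |t - 1| = s := by rw [abs_of_nonneg hs0]
    have e2 : |t| = 1 + s := by rw [abs_of_pos (by linarith)]; simp [hs]
    rw [e1, e2]
    exact branchB hP hs0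

private lemma scalar_key_scaled_pos {P : ℝ} (hP2 : 2 ≤ P) {c : ℝ} (hc : 0 < c) (t : ℝ) :
    |t - c| ^ P ≤ 2 ^ (P-2) * |t| ^ P - P * 2 ^ (P-2) * (|c| ^ (P-2) * c) * (t - c) := by
  have hkey := scalar_key hP2 (t/c)
  have hcP : (0:ℝ) < c ^ P := Real.rpow_pos_of_pos hc P
  have e1 : |t/c - 1| ^ P = |t - c| ^ P / c ^ P := by
    rw [show t/c - 1 = (t - c)/c by field_simp, abs_div, abs_of_pos hc,
      Real.div_rpow (abs_nonneg _) hc.le]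
  have e2 : |t/c| ^ P = |t| ^ P / c ^ P := by
    rw [abs_div, abs_of_pos hc, Real.div_rpow (abs_nonneg _) hc.le]
  have e3 : t/c - 1 = (t-c)/c := by field_simp
  rw [e1, e2, e3] at hkey
  have hkey2 := mul_le_mul_of_nonneg_right hkey hcP.le
  have ecc : c ^ P / c = c ^ (P-1) := by
    rw [← Real.rpow_sub_one hc.ne' P]  -- c ^ (P-1) = c ^ P / c ... check direction
  have ecP1 : |c| ^ (P-2) * c = c ^ (P-1) := by
    rw [abs_of_pos hc, ← Real.rpow_add_one hc.ne' (P-2)]; ring_nf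
  rw [ecP1]
  have expand : (|t - c| ^ P / c ^ P + P * 2 ^ (P-2) * ((t-c)/c)) * c ^ P
      = |t - c| ^ P + P * 2 ^ (P-2) * (t - c) * (c ^ P / c) := by
    field_simp
  have expand2 : 2 ^ (P-2) * (|t| ^ P / c ^ P) * c ^ P = 2 ^ (P-2) * |t| ^ P := by
    field_simp
  rw [expand, expand2, ecc] at hkey2
  linarith

lemma scalar_key_scaled {P : ℝ} (hP2 : 2 ≤ P) (c t : ℝ) :
    |t - c| ^ P ≤ 2 ^ (P-2) * |t| ^ P - P * 2 ^ (P-2) * (|c| ^ (P-2) * c) * (t - c) := by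
  rcases lt_trichotomy c 0 with hc | hc | hc
  · have h := scalar_key_scaled_pos hP2 (c := -c) (by linarith) (-t)
    have e1 : |-t - -c| = |t - c| := by rw [show -t - -c = -(t-c) by ring, abs_neg]
    have e2 : |-t| = |t| := abs_neg t
    have e3 : |-c| = |c| := abs_neg c
    rw [e1, e2, e3] at h
    calc |t - c| ^ P ≤ 2 ^ (P-2) * |t| ^ P - P * 2 ^ (P-2) * (|c| ^ (P-2) * -c) * (-t - -c) := h
      _ = 2 ^ (P-2) * |t| ^ P - P * 2 ^ (P-2) * (|c| ^ (P-2) * c) * (t - c) := by ring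
  · subst hc
    have hK1 : (1:ℝ) ≤ 2 ^ (P-2) := by
      rcases eq_or_lt_of_le hP2 with h | h
      · rw [← h]; norm_num
      · exact (oneLtK h).le
    have h0 : 0 ≤ |t| ^ P := Real.rpow_nonneg (abs_nonneg t) P
    simp only [sub_zero, mul_zero, zero_mul, abs_zero]
    nlinarith
  · exact scalar_key_scaled_pos hP2 hc t

-- weighted average inequality, P ≥ 2
lemma avg_key_ge2 {P : ℝ} (hP2 : 2 ≤ P) {k : ℕ} (a t : Fin k → ℝ)
    (ha : ∀ i, 0 ≤ a i) (hsum : ∑ i, a i = 1) :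
    ∑ i, a i * |t i - ∑ j, a j * t j| ^ P ≤ 2 ^ (P-2) * ∑ i, a i * |t i| ^ P := by
  set c : ℝ := ∑ j, a j * t j with hc
  set w : ℝ := |c| ^ (P-2) * c with hw
  have step1 : ∑ i, a i * |t i - c| ^ P
      ≤ ∑ i, (2 ^ (P-2) * (a i * |t i| ^ P) - P * 2 ^ (P-2) * w * (a i * (t i - c))) := by
    apply Finset.sum_le_sum
    intro i _
    have h := scalar_key_scaled hP2 c (t i)
    have h2 := mul_le_mul_of_nonneg_left h (ha i)
    calc a i * |t i - c| ^ P
        ≤ a i * (2 ^ (P-2) * |t i| ^ P - P * 2 ^ (P-2) * (|c| ^ (P-2) * c) * (t i - c)) := h2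
      _ = 2 ^ (P-2) * (a i * |t i| ^ P) - P * 2 ^ (P-2) * w * (a i * (t i - c)) := by
          rw [hw]; ring
  have step2 : ∑ i, (2 ^ (P-2) * (a i * |t i| ^ P) - P * 2 ^ (P-2) * w * (a i * (t i - c)))
      = 2 ^ (P-2) * ∑ i, a i * |t i| ^ P - P * 2 ^ (P-2) * w * ∑ i, a i * (t i - c) := by
    rw [Finset.sum_sub_distrib, ← Finset.mul_sum, ← Finset.mul_sum]
  have step3 : ∑ i, a i * (t i - c) = 0 := by
    have : ∑ i, a i * (t i - c) = (∑ i, a i * t i) - (∑ i, a i) * c := by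
      rw [Finset.sum_mul]
      rw [← Finset.sum_sub_distrib]
      apply Finset.sum_congr rfl
      intro i _; ring
    rw [this, hsum, ← hc]; ring
  rw [step2, step3] at step1
  simpa using step1

lemma avg_key_lt2 {P : ℝ} (hP1 : 1 < P) (hP2 : P < 2) {k : ℕ} (a t : Fin k → ℝ)
    (ha : ∀ i, 0 ≤ a i) (hsum : ∑ i, a i = 1) :
    ∑ i, a i * |t i - ∑ j, a j * t j| ^ P ≤ 2 ^ (2-P) * ∑ i, a i * |t i| ^ P := by
  have hP0 : (0:ℝ) < P := by linarith
  have hP10 : (0:ℝ) < P - 1 := by linarith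
  set Q : ℝ := P / (P-1) with hQ
  have hQ0 : 0 < Q := by positivity
  have hQconj : 1/P + 1/Q = 1 := by rw [hQ]; field_simp; ring
  have hQ2 : 2 ≤ Q := by
    rw [hQ, le_div_iff₀ hP10]; nlinarith
  set c : ℝ := ∑ j, a j * t j with hc
  set u : Fin k → ℝ := fun i => t i - c with hu
  set g : Fin k → ℝ := fun i => |u i| ^ (P-2) * u i with hg
  -- basic facts
  have f1 : ∀ i, u i * g i = |u i| ^ P := by
    intro i
    rcases eq_or_ne (u i) 0 with h | h
    · simp [hg, h, Real.zero_rpow hP0.ne']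
    · have habs : (0:ℝ) < |u i| := abs_pos.2 h
      simp only [hg]
      have h1 : |u i| ^ (P-2) * |u i| = |u i| ^ (P-1) := by
        rw [← Real.rpow_add_one habs.ne' (P-2)]; ring_nf
      have h2 : |u i| ^ (P-1) * |u i| = |u i| ^ P := by
        rw [← Real.rpow_add_one habs.ne' (P-1)]; ring_nf
      calc u i * (|u i| ^ (P-2) * u i) = |u i| ^ (P-2) * (u i * u i) := by ring
        _ = |u i| ^ (P-2) * (|u i| * |u i|) := by rw [abs_mul_abs_self]
        _ = |u i| ^ (P-2) * |u i| * |u i| := by ring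
        _ = |u i| ^ P := by rw [h1, h2]
  have f2 : ∀ i, |g i| = |u i| ^ (P-1) := by
    intro i
    rcases eq_or_ne (u i) 0 with h | h
    · simp [hg, h, Real.zero_rpow (by linarith : P - 1 ≠ 0)]
    · have habs : (0:ℝ) < |u i| := abs_pos.2 h
      simp only [hg, abs_mul, abs_of_nonneg (Real.rpow_nonneg (abs_nonneg (u i)) (P-2))]
      rw [← Real.rpow_add_one habs.ne' (P-2)]
      ring_nf
  have f3 : ∀ i, |g i| ^ Q = |u i| ^ P := by
    intro i
    rw [f2, ← Real.rpow_mul (abs_nonneg (u i))]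
    congr 1
    rw [hQ]; field_simp
  set S : ℝ := ∑ i, a i * |u i| ^ P with hS
  set T : ℝ := ∑ i, a i * |t i| ^ P with hT
  have hT0 : 0 ≤ T := Finset.sum_nonneg fun i _ =>
    mul_nonneg (ha i) (Real.rpow_nonneg (abs_nonneg _) _)
  have hS0 : 0 ≤ S := Finset.sum_nonneg fun i _ =>
    mul_nonneg (ha i) (Real.rpow_nonneg (abs_nonneg _) _)
  set gbar : ℝ := ∑ i, a i * g i with hgbar
  -- step 1 : S = ∑ aᵢ tᵢ (gᵢ - gbar)
  have step1 : S = ∑ i, a i * (t i * (g i - gbar)) := by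
    have e : ∀ i, a i * (t i * (g i - gbar)) = a i * t i * g i - (a i * t i) * gbar := by
      intro i; ring
    calc S = ∑ i, a i * (u i * g i) := by
            rw [hS]; exact Finset.sum_congr rfl fun i _ => by rw [f1]
      _ = ∑ i, (a i * t i * g i - a i * (c * g i)) := by
            apply Finset.sum_congr rfl; intro i _; simp only [hu]; ring
      _ = ∑ i, a i * t i * g i - c * ∑ i, a i * g i := by
            rw [Finset.sum_sub_distrib]
            congr 1
            rw [Finset.mul_sum]
            exact Finset.sum_congr rfl fun i _ => by ring
      _ = ∑ i, a i * t i * g i - (∑ i, a i * t i) * gbar := by rw [← hgbar, ← hc]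
      _ = ∑ i, a i * (t i * (g i - gbar)) := by
            rw [Finset.sum_mul, ← Finset.sum_sub_distrib]
            apply Finset.sum_congr rfl; intro i _; ring
  -- step 2 : bound by absolute values
  have step2 : S ≤ ∑ i, (a i ^ (1/P) * |t i|) * (a i ^ (1/Q) * |g i - gbar|) := by
    rw [step1]
    apply Finset.sum_le_sum
    intro i _
    have e1 : a i ^ (1/P) * |t i| * (a i ^ (1/Q) * |g i - gbar|)
        = (a i ^ (1/P) * a i ^ (1/Q)) * (|t i| * |g i - gbar|) := by ring
    have e2 : a i ^ (1/P) * a i ^ (1/Q) = a i := by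
      rw [← Real.rpow_add' (ha i) (by rw [hQconj]; norm_num), hQconj, Real.rpow_one]
    rw [e1, e2, ← abs_mul]
    exact mul_le_mul_of_nonneg_left (le_abs_self _) (ha i)
  -- step 3 : Hölder
  have hconj : P.HolderConjugate Q := Real.holderConjugate_iff.mpr ⟨hP1, by rw [← hQconj]; norm_num [one_div]⟩
  have step3 : ∑ i, (a i ^ (1/P) * |t i|) * (a i ^ (1/Q) * |g i - gbar|)
      ≤ (∑ i, a i * |t i| ^ P) ^ (1/P) * (∑ i, a i * |g i - gbar| ^ Q) ^ (1/Q) := by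
    have h := Real.inner_le_Lp_mul_Lq_of_nonneg (s := Finset.univ) hconj
      (f := fun i => a i ^ (1/P) * |t i|) (g := fun i => a i ^ (1/Q) * |g i - gbar|)
      (fun i _ => mul_nonneg (Real.rpow_nonneg (ha i) _) (abs_nonneg _))
      (fun i _ => mul_nonneg (Real.rpow_nonneg (ha i) _) (abs_nonneg _))
    have e1 : ∀ i, (a i ^ (1/P) * |t i|) ^ P = a i * |t i| ^ P := by
      intro i
      rw [Real.mul_rpow (Real.rpow_nonneg (ha i) _) (abs_nonneg _),
        ← Real.rpow_mul (ha i)]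
      congr 2
      field_simp
      simp
    have e2 : ∀ i, (a i ^ (1/Q) * |g i - gbar|) ^ Q = a i * |g i - gbar| ^ Q := by
      intro i
      rw [Real.mul_rpow (Real.rpow_nonneg (ha i) _) (abs_nonneg _),
        ← Real.rpow_mul (ha i)]
      congr 2
      field_simp
      simp
    calc ∑ i, (a i ^ (1/P) * |t i|) * (a i ^ (1/Q) * |g i - gbar|)
        ≤ (∑ i, (a i ^ (1/P) * |t i|) ^ P) ^ (1/P)
          * (∑ i, (a i ^ (1/Q) * |g i - gbar|) ^ Q) ^ (1/Q) := h
      _ = (∑ i, a i * |t i| ^ P) ^ (1/P) * (∑ i, a i * |g i - gbar| ^ Q) ^ (1/Q) := by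
          congr 2
          · exact Finset.sum_congr rfl fun i _ => e1 i
          · exact Finset.sum_congr rfl fun i _ => e2 i
  -- step 4 : apply the case Q ≥ 2 to the g values
  have step4 : ∑ i, a i * |g i - gbar| ^ Q ≤ 2 ^ (Q-2) * S := by
    have h := avg_key_ge2 hQ2 a g ha hsum
    rw [← hgbar] at h
    calc ∑ i, a i * |g i - gbar| ^ Q ≤ 2 ^ (Q-2) * ∑ i, a i * |g i| ^ Q := h
      _ = 2 ^ (Q-2) * S := by
          congr 1
          rw [hS]
          exact Finset.sum_congr rfl fun i _ => by rw [f3]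
  -- step 5 : combine
  have hsum_g0 : 0 ≤ ∑ i, a i * |g i - gbar| ^ Q := Finset.sum_nonneg fun i _ =>
    mul_nonneg (ha i) (Real.rpow_nonneg (abs_nonneg _) _)
  have hTp0 : 0 ≤ (∑ i, a i * |t i| ^ P) ^ (1/P) := Real.rpow_nonneg (hT ▸ hT0) _
  have step5 : S ≤ T ^ (1/P) * (2 ^ (Q-2) * S) ^ (1/Q) := by
    have h1 : (∑ i, a i * |g i - gbar| ^ Q) ^ (1/Q) ≤ (2 ^ (Q-2) * S) ^ (1/Q) :=
      Real.rpow_le_rpow hsum_g0 step4 (by positivity)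
    have h2 := mul_le_mul_of_nonneg_left h1 hTp0
    have h3 := le_trans (le_trans step2 step3) h2
    rw [← hT] at h3
    exact h3
  rcases eq_or_lt_of_le hS0 with hS0' | hSpos
  · rw [← hS0']
    have : (0:ℝ) ≤ 2 ^ (2-P) * T := mul_nonneg (Real.rpow_nonneg (by norm_num) _) hT0
    exact this
  · have e0 : S = S ^ (1/P) * S ^ (1/Q) := by
      rw [← Real.rpow_add hSpos, hQconj, Real.rpow_one]
    have hSQpos : 0 < S ^ (1/Q) := Real.rpow_pos_of_pos hSpos _
    have e1 : (2 ^ (Q-2) * S) ^ (1/Q) = 2 ^ ((Q-2)/Q) * S ^ (1/Q) := by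
      rw [Real.mul_rpow (by positivity) hS0, ← Real.rpow_mul (by norm_num : (0:ℝ) ≤ 2)]
      congr 2
      ring
    have step6 : S ^ (1/P) * S ^ (1/Q) ≤ (T ^ (1/P) * 2 ^ ((Q-2)/Q)) * S ^ (1/Q) := by
      rw [← e0]
      calc S ≤ T ^ (1/P) * (2 ^ (Q-2) * S) ^ (1/Q) := step5
        _ = (T ^ (1/P) * 2 ^ ((Q-2)/Q)) * S ^ (1/Q) := by rw [e1]; ring
    have step7 : S ^ (1/P) ≤ T ^ (1/P) * 2 ^ ((Q-2)/Q) :=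
      le_of_mul_le_mul_right step6 hSQpos
    have step8 : (S ^ (1/P)) ^ P ≤ (T ^ (1/P) * 2 ^ ((Q-2)/Q)) ^ P :=
      Real.rpow_le_rpow (Real.rpow_nonneg hS0 _) step7 hP0.le
    have e2 : (S ^ (1/P)) ^ P = S := by
      rw [← Real.rpow_mul hS0]
      rw [show 1/P * P = 1 by field_simp, Real.rpow_one]
    have e3 : (T ^ (1/P) * 2 ^ ((Q-2)/Q)) ^ P = T * 2 ^ (2-P) := by
      rw [Real.mul_rpow (Real.rpow_nonneg hT0 _) (by positivity),
        ← Real.rpow_mul hT0, ← Real.rpow_mul (by norm_num : (0:ℝ) ≤ 2)]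
      rw [show 1/P * P = 1 by field_simp, Real.rpow_one]
      congr 2
      rw [hQ]
      field_simp
      ring
    rw [e2, e3] at step8
    linarith

lemma avg_key {P : ℝ} (hP1 : 1 < P) {k : ℕ} (a t : Fin k → ℝ)
    (ha : ∀ i, 0 ≤ a i) (hsum : ∑ i, a i = 1) :
    ∑ i, a i * |t i - ∑ j, a j * t j| ^ P ≤ 2 ^ |P - 2| * ∑ i, a i * |t i| ^ P := by
  rcases le_or_gt 2 P with h | h
  · rw [abs_of_nonneg (by linarith : (0:ℝ) ≤ P - 2)]
    exact avg_key_ge2 h a t ha hsum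
  · rw [abs_of_neg (by linarith : P - 2 < 0), show -(P-2) = 2 - P by ring]
    exact avg_key_lt2 hP1 h a t ha hsum

open MeasureTheory in
lemma coeFn_lp_sum {Ω : Type*} [MeasurableSpace Ω] {μ : Measure Ω} {p : ℝ≥0∞}
    {k : ℕ} (f : Fin k → Lp ℝ p μ) (s : Finset (Fin k)) :
    ⇑(∑ i ∈ s, f i) =ᵐ[μ] (fun ω => ∑ i ∈ s, f i ω) := by
  classical
  induction s using Finset.induction_on with
  | empty => simp only [Finset.sum_empty]; exact Lp.coeFn_zero ℝ p μ
  | insert j s hnotmem ih =>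
    rw [Finset.sum_insert hnotmem]
    filter_upwards [Lp.coeFn_add (f j) (∑ i ∈ s, f i), ih] with ω h1 h2
    rw [Finset.sum_insert hnotmem]
    simp only [h1, Pi.add_apply, h2]

open MeasureTheory

theorem stmt_11 {Ω : Type*} [MeasurableSpace Ω] (μ : Measure Ω)
    (p p' : ℝ≥0∞) (hp : 1 < p) (hpt : p ≠ ∞) (hconj : 1 / p + 1 / p' = 1)
    (k : ℕ) (x : Fin k → Lp ℝ p μ) (hx : ∀ i, ‖x i‖ ≤ 1)
    (a : Fin k → ℝ) (ha : ∀ i, 0 ≤ a i) (hsum : ∑ i, a i = 1)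
    (x₀ : Lp ℝ p μ) (hx₀ : x₀ = ∑ i, a i • x i) :
    ∃ i, ‖x₀ - x i‖ ≤ (2 : ℝ) ^ |1 / p.toReal - 1 / p'.toReal| := by
  have hp0 : p ≠ 0 := (zero_lt_one.trans hp).ne'
  haveI : Fact (1 ≤ p) := ⟨hp.le⟩
  set P : ℝ := p.toReal with hPdef
  have hP1 : 1 < P := by
    have := (ENNReal.toReal_lt_toReal (by simp) hpt).2 hp
    simpa using this
  have hP0 : (0:ℝ) < P := by linarith
  -- exponent computation
  have hp'eq : 1 / p'.toReal = 1 - 1/P := by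
    have h1 : 1/p' + 1/p = 1 := by rw [add_comm]; exact hconj
    have h2 : (1:ℝ≥0∞)/p ≠ ∞ := by
      simp only [one_div]
      exact ENNReal.inv_ne_top.2 hp0
    have h3 : 1/p' = 1 - 1/p := ENNReal.eq_sub_of_add_eq h2 h1
    have h4 : (1:ℝ≥0∞)/p ≤ 1 := by
      simp only [one_div]; exact ENNReal.inv_le_one.2 hp.le
    have h5 : ((1:ℝ≥0∞) - 1/p).toReal = (1:ℝ≥0∞).toReal - ((1:ℝ≥0∞)/p).toReal :=
      ENNReal.toReal_sub_of_le h4 (by simp)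
    have h6 : ((1:ℝ≥0∞)/p).toReal = 1/P := by
      simp [one_div, ENNReal.toReal_inv, hPdef]
    have h7 : ((1:ℝ≥0∞)/p').toReal = 1/p'.toReal := by
      simp [one_div, ENNReal.toReal_inv]
    rw [← h7, h3, h5, h6]
    simp
  have hexp : |1 / p.toReal - 1 / p'.toReal| = |P - 2| * (1/P) := by
    rw [hp'eq]
    rw [show (1:ℝ) / p.toReal = 1/P from rfl]
    rw [show (1:ℝ)/P - (1 - 1/P) = (2 - P)/P by field_simp; ring]
    rw [abs_div, abs_of_pos hP0]
    rw [show |2 - P| = |P - 2| from abs_sub_comm 2 P]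
    ring
  -- k ≥ 1 implicitly: get index with positive weight
  -- norm-power = integral
  have normpow : ∀ f : Lp ℝ p μ, ‖f‖ ^ P = ∫ ω, ‖f ω‖ ^ P ∂μ := by
    intro f
    have h2 := (Lp.memLp f).eLpNorm_eq_integral_rpow_norm hp0 hpt
    have hint0 : 0 ≤ ∫ ω, ‖f ω‖ ^ P ∂μ :=
      integral_nonneg fun ω => Real.rpow_nonneg (norm_nonneg _) _
    rw [Lp.norm_def, h2, ENNReal.toReal_ofReal (Real.rpow_nonneg hint0 _)]
    rw [← Real.rpow_mul hint0]
    rw [inv_mul_cancel₀ hP0.ne', Real.rpow_one]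
  have integ : ∀ f : Lp ℝ p μ, Integrable (fun ω => ‖f ω‖ ^ P) μ :=
    fun f => (Lp.memLp f).integrable_norm_rpow hp0 hpt
  -- a.e. identities
  have haesum : ⇑x₀ =ᵐ[μ] fun ω => ∑ i, a i * x i ω := by
    rw [hx₀]
    refine (coeFn_lp_sum (fun i => a i • x i) Finset.univ).trans ?_
    have hall : ∀ᵐ ω ∂μ, ∀ i : Fin k, (a i • x i) ω = a i * x i ω := by
      rw [MeasureTheory.ae_all_iff]
      intro i
      filter_upwards [Lp.coeFn_smul (a i) (x i)] with ω hω
      rw [hω]; simp [smul_eq_mul]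
    filter_upwards [hall] with ω hω
    exact Finset.sum_congr rfl fun i _ => hω i
  have haesub : ∀ᵐ ω ∂μ, ∀ i : Fin k, (x₀ - x i) ω = x₀ ω - x i ω := by
    rw [MeasureTheory.ae_all_iff]
    intro i
    exact Lp.coeFn_sub x₀ (x i)
  have keyae : ∀ᵐ ω ∂μ, ∑ i, a i * ‖(x₀ - x i) ω‖ ^ P
      ≤ 2 ^ |P - 2| * ∑ i, a i * ‖x i ω‖ ^ P := by
    filter_upwards [haesum, haesub] with ω h1 h2
    have h3 := avg_key hP1 a (fun i => x i ω) ha hsum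
    calc ∑ i, a i * ‖(x₀ - x i) ω‖ ^ P
        = ∑ i, a i * |x i ω - ∑ j, a j * x j ω| ^ P := by
          apply Finset.sum_congr rfl
          intro i _
          rw [h2 i, Real.norm_eq_abs, h1, abs_sub_comm]
      _ ≤ 2 ^ |P - 2| * ∑ i, a i * |x i ω| ^ P := h3
      _ = 2 ^ |P - 2| * ∑ i, a i * ‖x i ω‖ ^ P := by
          simp [Real.norm_eq_abs]
  -- integrate
  have int1 : Integrable (fun ω => ∑ i, a i * ‖(x₀ - x i) ω‖ ^ P) μ := by
    apply integrable_finset_sum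
    intro i _
    exact ((integ (x₀ - x i)).const_mul (a i))
  have int2 : Integrable (fun ω => 2 ^ |P - 2| * ∑ i, a i * ‖x i ω‖ ^ P) μ := by
    apply Integrable.const_mul
    apply integrable_finset_sum
    intro i _
    exact ((integ (x i)).const_mul (a i))
  have hInt := integral_mono_ae int1 int2 keyae
  have e1 : ∫ ω, ∑ i, a i * ‖(x₀ - x i) ω‖ ^ P ∂μ = ∑ i, a i * ‖x₀ - x i‖ ^ P := by
    rw [integral_finset_sum _ (fun i (_ : i ∈ Finset.univ) => (integ (x₀ - x i)).const_mul (a i))]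
    apply Finset.sum_congr rfl
    intro i _
    rw [integral_const_mul, normpow]
  have e2 : ∫ ω, 2 ^ |P - 2| * ∑ i, a i * ‖x i ω‖ ^ P ∂μ
      = 2 ^ |P-2| * ∑ i, a i * ‖x i‖ ^ P := by
    rw [integral_const_mul]
    congr 1
    rw [integral_finset_sum _ (fun i (_ : i ∈ Finset.univ) => (integ (x i)).const_mul (a i))]
    apply Finset.sum_congr rfl
    intro i _
    rw [integral_const_mul, normpow]
  rw [e1, e2] at hInt
  have hK0 : (0:ℝ) < 2 ^ |P - 2| := Real.rpow_pos_of_pos two_pos _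
  have hbound : ∑ i, a i * ‖x i‖ ^ P ≤ 1 := by
    calc ∑ i, a i * ‖x i‖ ^ P ≤ ∑ i, a i * 1 := by
          apply Finset.sum_le_sum
          intro i _
          exact mul_le_mul_of_nonneg_left
            (Real.rpow_le_one (norm_nonneg (x i)) (hx i) hP0.le) (ha i)
      _ = ∑ i, a i := by simp
      _ = 1 := hsum
  have hfinal : ∑ i, a i * ‖x₀ - x i‖ ^ P ≤ 2 ^ |P - 2| := by
    calc ∑ i, a i * ‖x₀ - x i‖ ^ P ≤ 2 ^ |P-2| * ∑ i, a i * ‖x i‖ ^ P := hInt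
      _ ≤ 2 ^ |P-2| * 1 := mul_le_mul_of_nonneg_left hbound hK0.le
      _ = 2 ^ |P-2| := mul_one _
  have hex : ∃ i, ‖x₀ - x i‖ ^ P ≤ 2 ^ |P - 2| := by
    by_contra hno
    push_neg at hno
    obtain ⟨i₀, hi₀⟩ : ∃ i, 0 < a i := by
      by_contra hano
      push_neg at hano
      have h0 : ∑ i, a i ≤ 0 := Finset.sum_nonpos fun i _ => hano i
      rw [hsum] at h0; linarith
    have hstrict : ∑ i, a i * (2 ^ |P-2|) < ∑ i, a i * ‖x₀ - x i‖ ^ P := by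
      apply Finset.sum_lt_sum
      · intro i _
        exact mul_le_mul_of_nonneg_left (hno i).le (ha i)
      · exact ⟨i₀, Finset.mem_univ i₀, mul_lt_mul_of_pos_left (hno i₀) hi₀⟩
    have hsum2 : ∑ i, a i * (2 ^ |P-2| : ℝ) = 2 ^ |P-2| := by
      rw [← Finset.sum_mul, hsum, one_mul]
    rw [hsum2] at hstrict
    linarith
  obtain ⟨i, hi⟩ := hex
  refine ⟨i, ?_⟩
  have h1 : ‖x₀ - x i‖ = (‖x₀ - x i‖ ^ P) ^ (1/P) := by
    rw [← Real.rpow_mul (norm_nonneg (x₀ - x i))]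
    rw [show P * (1/P) = 1 by field_simp, Real.rpow_one]
  rw [h1, hexp]
  have h2 : (‖x₀ - x i‖ ^ P) ^ (1/P) ≤ ((2:ℝ) ^ |P-2|) ^ (1/P) :=
    Real.rpow_le_rpow (Real.rpow_nonneg (norm_nonneg (x₀ - x i)) _) hi (by positivity)
  calc (‖x₀ - x i‖ ^ P) ^ (1/P) ≤ ((2:ℝ) ^ |P-2|) ^ (1/P) := h2
    _ = 2 ^ (|P-2| * (1/P)) := by rw [← Real.rpow_mul (by norm_num : (0:ℝ) ≤ 2)]
end

section
/- Let X be a real Banach space and let a₁, a₂, a₃ ∈ X satisfy ‖aᵢ − aⱼ‖ ≤ 2R for all i, j (i.e., the triangle a₁a₂a₃ has diameter at most 2R). Suppose further the triangle co{a₁,a₂,a₃} is covered by the closed balls B_R(a₁), B_R(a₂), B_R(a₃). Then these three balls have a common point lying in the affine plane spanned by a₁, a₂, a₃. -/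
theorem stmt_12 {X : Type*} [NormedAddCommGroup X] [NormedSpace ℝ X] [CompleteSpace X]
    (a₁ a₂ a₃ : X) (R : ℝ)
    (hdiam : ∀ x ∈ ({a₁, a₂, a₃} : Set X), ∀ y ∈ ({a₁, a₂, a₃} : Set X), dist x y ≤ 2 * R)
    (hcov : convexHull ℝ ({a₁, a₂, a₃} : Set X) ⊆
      Metric.closedBall a₁ R ∪ Metric.closedBall a₂ R ∪ Metric.closedBall a₃ R) :
    ∃ z, z ∈ Metric.closedBall a₁ R ∧ z ∈ Metric.closedBall a₂ R ∧
      z ∈ Metric.closedBall a₃ R ∧ z ∈ affineSpan ℝ ({a₁, a₂, a₃} : Set X) := by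
  classical
  set S : Set X := {a₁, a₂, a₃} with hS
  set T := convexHull ℝ S with hTdef
  have hTconv : Convex ℝ T := convex_convexHull ℝ S
  have hSfin : S.Finite := ((Set.finite_singleton a₃).insert a₂).insert a₁
  have hTcompact : IsCompact T := hSfin.isCompact_convexHull (𝕜 := ℝ)
  have ha₁S : a₁ ∈ S := by simp [hS]
  have ha₂S : a₂ ∈ S := by simp [hS]
  have ha₃S : a₃ ∈ S := by simp [hS]
  have ha₁T : a₁ ∈ T := subset_convexHull ℝ S ha₁S
  have ha₂T : a₂ ∈ T := subset_convexHull ℝ S ha₂S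
  have ha₃T : a₃ ∈ T := subset_convexHull ℝ S ha₃S
  set F₁ := T ∩ Metric.closedBall a₁ R with hF₁def
  set F₂ := T ∩ Metric.closedBall a₂ R with hF₂def
  set F₃ := T ∩ Metric.closedBall a₃ R with hF₃def
  have hF₁closed : IsClosed F₁ := hTcompact.isClosed.inter Metric.isClosed_closedBall
  have hF₂closed : IsClosed F₂ := hTcompact.isClosed.inter Metric.isClosed_closedBall
  have hF₃closed : IsClosed F₃ := hTcompact.isClosed.inter Metric.isClosed_closedBall
  have hF₁conv : Convex ℝ F₁ := hTconv.inter (convex_closedBall a₁ R)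
  have hF₂conv : Convex ℝ F₂ := hTconv.inter (convex_closedBall a₂ R)
  have hF₃conv : Convex ℝ F₃ := hTconv.inter (convex_closedBall a₃ R)
  -- midpoints
  have hmid : ∀ p ∈ S, ∀ q ∈ S, midpoint ℝ p q ∈ T ∩ Metric.closedBall p R ∩ Metric.closedBall q R := by
    intro p hp q hq
    have hpq : dist p q ≤ 2 * R := hdiam p hp q hq
    refine ⟨⟨?_, ?_⟩, ?_⟩
    · exact hTconv.segment_subset (subset_convexHull ℝ S hp) (subset_convexHull ℝ S hq)
        (midpoint_mem_segment p q)
    · rw [Metric.mem_closedBall, dist_midpoint_left]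
      have h2 : ‖(2:ℝ)‖⁻¹ = 1/2 := by norm_num
      rw [h2]; linarith
    · rw [Metric.mem_closedBall, dist_midpoint_right]
      have h2 : ‖(2:ℝ)‖⁻¹ = 1/2 := by norm_num
      rw [h2]; linarith
  have hm12 : midpoint ℝ a₁ a₂ ∈ F₁ ∩ F₂ := by
    have := hmid a₁ ha₁S a₂ ha₂S
    exact ⟨⟨this.1.1, this.1.2⟩, ⟨this.1.1, this.2⟩⟩
  have hm13 : midpoint ℝ a₁ a₃ ∈ F₁ ∩ F₃ := by
    have := hmid a₁ ha₁S a₃ ha₃S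
    exact ⟨⟨this.1.1, this.1.2⟩, ⟨this.1.1, this.2⟩⟩
  have hm23 : midpoint ℝ a₂ a₃ ∈ F₂ ∩ F₃ := by
    have := hmid a₂ ha₂S a₃ ha₃S
    exact ⟨⟨this.1.1, this.1.2⟩, ⟨this.1.1, this.2⟩⟩
  by_cases hne : (F₁ ∩ F₂ ∩ F₃).Nonempty
  · obtain ⟨z, hz⟩ := hne
    exact ⟨z, hz.1.1.2, hz.1.2.2, hz.2.2,
      (convexHull_subset_affineSpan S) hz.1.1.1⟩
  exfalso
  rw [Set.not_nonempty_iff_eq_empty] at hne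
  have hKcomp : IsCompact (F₁ ∩ F₂) :=
    (hTcompact.inter_right Metric.isClosed_closedBall).inter_right hF₂closed
  have hKconv : Convex ℝ (F₁ ∩ F₂) := hF₁conv.inter hF₂conv
  have hdisj : Disjoint (F₁ ∩ F₂) F₃ := Set.disjoint_iff_inter_eq_empty.mpr hne
  obtain ⟨f, u, v, hfu, huv, hfv⟩ :=
    geometric_hahn_banach_compact_closed hKconv hKcomp hF₃conv hF₃closed hdisj
  set c : ℝ := (u + v) / 2 with hc
  have huc : u < c := by rw [hc]; linarith
  have hcv : c < v := by rw [hc]; linarith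
  -- IVT helper
  have key : ∀ (F : Set X), Convex ℝ F → ∀ p ∈ F, ∀ q ∈ F, f p < c → c < f q →
      ∃ s ∈ F, f s = c := by
    intro F hF p hp q hq hpc hqc
    have hcont : ContinuousOn (fun t : ℝ => f ((1 - t) • p + t • q)) (Set.Icc 0 1) := by
      apply Continuous.continuousOn
      fun_prop
    have hsub := intermediate_value_Icc (by norm_num : (0:ℝ) ≤ 1) hcont
    have hc' : c ∈ Set.Icc (f ((1 - (0:ℝ)) • p + (0:ℝ) • q)) (f ((1 - (1:ℝ)) • p + (1:ℝ) • q)) := by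
      simp only [sub_zero, one_smul, zero_smul, add_zero, sub_self, zero_add]
      exact ⟨le_of_lt hpc, le_of_lt hqc⟩
    obtain ⟨t, ht, hft⟩ := hsub hc'
    exact ⟨(1 - t) • p + t • q, hF hp hq (by linarith [ht.2]) ht.1 (by ring), hft⟩
  have hfm12 : f (midpoint ℝ a₁ a₂) < c := lt_trans (hfu _ hm12) huc
  have hfm13 : c < f (midpoint ℝ a₁ a₃) := lt_trans hcv (hfv _ hm13.2)
  have hfm23 : c < f (midpoint ℝ a₂ a₃) := lt_trans hcv (hfv _ hm23.2)
  obtain ⟨s₁, hs₁F, hs₁c⟩ := key F₁ hF₁conv _ hm12.1 _ hm13.1 hfm12 hfm13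
  obtain ⟨s₂, hs₂F, hs₂c⟩ := key F₂ hF₂conv _ hm12.2 _ hm23.1 hfm12 hfm23
  set D : Set X := T ∩ f ⁻¹' {c} with hD
  have hDconv : Convex ℝ D := hTconv.inter ((convex_singleton c).linear_preimage (f : X →ₗ[ℝ] ℝ))
  have hDsub : D ⊆ F₁ ∪ F₂ := by
    intro x hx
    have hxT : x ∈ T := hx.1
    have hxc : f x = c := hx.2
    rcases hcov hxT with (h | h) | h
    · exact Or.inl ⟨hxT, h⟩
    · exact Or.inr ⟨hxT, h⟩
    · exact absurd hxc (by have := hfv x ⟨hxT, h⟩; linarith)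
  have hs₁D : s₁ ∈ D := ⟨hs₁F.1, hs₁c⟩
  have hs₂D : s₂ ∈ D := ⟨hs₂F.1, hs₂c⟩
  have hpre : IsPreconnected D := hDconv.isPreconnected
  obtain ⟨w, hwD, hwF⟩ := (isPreconnected_closed_iff.mp hpre) F₁ F₂ hF₁closed hF₂closed
    hDsub ⟨s₁, hs₁D, hs₁F⟩ ⟨s₂, hs₂D, hs₂F⟩
  have : f w < u := hfu w hwF
  have : f w = c := hwD.2
  linarith
end

section
/- In a real Hilbert space, let a₁,…,aₙ be points, C = co{a₁,…,aₙ} their convex hull, and suppose the balls B_R(aᵢ) cover C (an admissible covering). Then for any point a ∈ ⋃ᵢ B_R(aᵢ), the segment from a to its metric projection b onto C is contained in ⋃ᵢ B_R(aᵢ). Consequently ⋃ᵢ B_R(aᵢ) is contractible. -/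
open Metric Set ContinuousMap
open scoped RealInnerProductSpace

theorem stmt_14 {H : Type*} [NormedAddCommGroup H] [InnerProductSpace ℝ H]
    (n : ℕ) (hn : 0 < n) (a : Fin n → H) (R : ℝ)
    (hcov : convexHull ℝ (Set.range a) ⊆ ⋃ i, Metric.closedBall (a i) R) :
    (∀ x ∈ ⋃ i, Metric.closedBall (a i) R,
      ∀ b ∈ convexHull ℝ (Set.range a),
        dist x b = Metric.infDist x (convexHull ℝ (Set.range a)) →
          segment ℝ x b ⊆ ⋃ i, Metric.closedBall (a i) R) ∧
    ContractibleSpace (⋃ i, Metric.closedBall (a i) R : Set H) := by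
  set C := convexHull ℝ (Set.range a) with hCdef
  set U := ⋃ i, Metric.closedBall (a i) R with hUdef
  have ha0 : a ⟨0, hn⟩ ∈ C := subset_convexHull ℝ _ ⟨_, rfl⟩
  have hne : C.Nonempty := ⟨_, ha0⟩
  haveI : Nonempty C := hne.to_subtype
  have hconv : Convex ℝ C := convex_convexHull ℝ _
  have hcompl : IsComplete C := ((Set.finite_range a).isCompact_convexHull ℝ).isComplete
  have hinf : ∀ x : H, Metric.infDist x C = ⨅ w : C, ‖x - w‖ := by
    intro x
    rw [Metric.infDist_eq_iInf]
    simp only [dist_eq_norm]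
  -- variational inequality for minimizers
  have key : ∀ x b, b ∈ C → dist x b = Metric.infDist x C →
      ∀ w ∈ C, ⟪x - b, w - b⟫ ≤ 0 := by
    intro x b hb hd
    rw [← norm_eq_iInf_iff_real_inner_le_zero hconv hb]
    rw [dist_eq_norm, hinf] at hd
    exact hd
  -- closed ball membership of the minimizer
  have ballmem : ∀ x b i, (∀ w ∈ C, ⟪x - b, w - b⟫ ≤ 0) →
      x ∈ Metric.closedBall (a i) R → b ∈ Metric.closedBall (a i) R := by
    intro x b i hvar hx
    have hai : a i ∈ C := subset_convexHull ℝ _ ⟨i, rfl⟩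
    have h1 := hvar (a i) hai
    rw [Metric.mem_closedBall, dist_eq_norm] at hx ⊢
    have e : x - a i = (x - b) + (b - a i) := by abel
    have hsq : ‖x - a i‖ ^ 2 = ‖x - b‖ ^ 2 + 2 * ⟪x - b, b - a i⟫ + ‖b - a i‖ ^ 2 := by
      rw [e, norm_add_sq_real]
    have hip : ⟪x - b, b - a i⟫ = - ⟪x - b, a i - b⟫ := by
      rw [← inner_neg_right]; congr 1; abel
    have hle : ‖b - a i‖ ^ 2 ≤ ‖x - a i‖ ^ 2 := by
      rw [hsq, hip]; nlinarith [sq_nonneg ‖x - b‖]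
    have : ‖b - a i‖ ≤ ‖x - a i‖ := by
      nlinarith [norm_nonneg (b - a i), norm_nonneg (x - a i)]
    exact this.trans hx
  -- Part 1
  have part1 : ∀ x ∈ U, ∀ b ∈ C, dist x b = Metric.infDist x C →
      segment ℝ x b ⊆ U := by
    intro x hx b hb hd
    obtain ⟨s, ⟨i, rfl⟩, hxi⟩ := hx
    have hbi : b ∈ Metric.closedBall (a i) R := ballmem x b i (key x b hb hd) hxi
    exact ((convex_closedBall (a i) R).segment_subset hxi hbi).trans
      (Set.subset_iUnion (fun i => Metric.closedBall (a i) R) i)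
  refine ⟨part1, ?_⟩
  -- projection map
  choose p hpC hpn using exists_norm_eq_iInf_of_complete_convex hne hcompl hconv
  have hpdist : ∀ u, dist u (p u) = Metric.infDist u C := by
    intro u; rw [dist_eq_norm, hpn u, hinf]
  have hpvar : ∀ u, ∀ w ∈ C, ⟪u - p u, w - p u⟫ ≤ 0 := fun u =>
    (norm_eq_iInf_iff_real_inner_le_zero hconv (hpC u)).1 (hpn u)
  have hplip : ∀ u v, ‖p u - p v‖ ≤ ‖u - v‖ := by
    intro u v
    have h1 := hpvar u (p v) (hpC v)
    have h2 := hpvar v (p u) (hpC u)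
    set d := p u - p v with hd
    have hdd : ‖d‖ ^ 2 ≤ ⟪u - v, d⟫ := by
      have e : ⟪u - v, d⟫ = ⟪d, d⟫ + ⟪u - p u, d⟫ - ⟪v - p v, d⟫ := by
        rw [← inner_add_left, ← inner_sub_left]; congr 1; rw [hd]; abel
      have e1 : ⟪u - p u, d⟫ = - ⟪u - p u, p v - p u⟫ := by
        rw [← inner_neg_right]; congr 1; rw [hd]; abel
      have e2 : ⟪v - p v, d⟫ = ⟪v - p v, p u - p v⟫ := rfl
      rw [e, e1, e2, real_inner_self_eq_norm_sq]
      linarith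
    have hle := (hdd.trans (real_inner_le_norm (u - v) d))
    rcases eq_or_lt_of_le (norm_nonneg d) with h0 | h0
    · rw [← h0]; exact norm_nonneg _
    · nlinarith
  have hpcont : Continuous p := by
    apply LipschitzWith.continuous (K := 1)
    intro u v
    simpa [edist_dist, dist_eq_norm] using
      (by exact_mod_cast (ENNReal.ofReal_le_ofReal (hplip u v)) :
        ENNReal.ofReal ‖p u - p v‖ ≤ ENNReal.ofReal ‖u - v‖)
  -- setup for contractibility
  have hCU : C ⊆ U := hcov
  have hmemU : ∀ y : U, ∀ t : unitInterval,
      (1 - (t : ℝ)) • (y : H) + (t : ℝ) • p y ∈ U := by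
    intro y t
    apply part1 y y.2 (p y) (hpC y) (hpdist y)
    exact ⟨1 - t, t, by linarith [t.2.2], t.2.1, by ring, rfl⟩
  have hmemC : ∀ y : U, ∀ t : unitInterval,
      (1 - (t : ℝ)) • p y + (t : ℝ) • a ⟨0, hn⟩ ∈ C := by
    intro y t
    exact hconv (hpC y) ha0 (by linarith [t.2.2]) t.2.1 (by ring)
  let y₀ : U := ⟨a ⟨0, hn⟩, hCU ha0⟩
  let r : C(U, U) := ⟨fun y => ⟨p y, hCU (hpC y)⟩,
    (hpcont.comp continuous_subtype_val).subtype_mk _⟩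
  have H1 : (ContinuousMap.id U).Homotopy r := by
    refine ⟨⟨fun q => ⟨(1 - (q.1 : ℝ)) • (q.2 : H) + (q.1 : ℝ) • p q.2,
      hmemU q.2 q.1⟩, ?_⟩, ?_, ?_⟩
    · apply Continuous.subtype_mk
      have hc1 : Continuous fun q : unitInterval × U => (q.1 : ℝ) :=
        continuous_subtype_val.comp continuous_fst
      have hc2 : Continuous fun q : unitInterval × U => (q.2 : H) :=
        continuous_subtype_val.comp continuous_snd
      exact ((continuous_const.sub hc1).smul hc2).add (hc1.smul (hpcont.comp hc2))
    · intro y; ext; simp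
    · intro y; ext; simp [r]
  have H2 : r.Homotopy (ContinuousMap.const U y₀) := by
    refine ⟨⟨fun q => ⟨(1 - (q.1 : ℝ)) • p q.2 + (q.1 : ℝ) • a ⟨0, hn⟩,
      hCU (hmemC q.2 q.1)⟩, ?_⟩, ?_, ?_⟩
    · apply Continuous.subtype_mk
      have hc1 : Continuous fun q : unitInterval × U => (q.1 : ℝ) :=
        continuous_subtype_val.comp continuous_fst
      have hc2 : Continuous fun q : unitInterval × U => (q.2 : H) :=
        continuous_subtype_val.comp continuous_snd
      exact ((continuous_const.sub hc1).smul (hpcont.comp hc2)).add (hc1.smul continuous_const)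
    · intro y; ext; simp [r]
    · intro y; ext; simp [y₀]
  rw [contractible_iff_id_nullhomotopic]
  exact ⟨y₀, ⟨H1.trans H2⟩⟩
end

section
/- In ℓ₁³ (ℝ³ with the ℓ¹-norm), let a₁ = (−2/3, 1/3, 1/3), a₂ = (1/3, −2/3, 1/3), a₃ = (1/3, 1/3, −2/3), a₄ = (−1/6, −1/6, −1/6). Then the convex hull (tetrahedron) co{a₁,a₂,a₃,a₄} is covered by the four closed unit balls B₁(aᵢ), i = 1,…,4. -/
theorem stmt_16
    (a₁ a₂ a₃ a₄ : PiLp 1 fun _ : Fin 3 => ℝ)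
    (h₁ : a₁ = (WithLp.equiv 1 (Fin 3 → ℝ)).symm ![-2/3, 1/3, 1/3])
    (h₂ : a₂ = (WithLp.equiv 1 (Fin 3 → ℝ)).symm ![1/3, -2/3, 1/3])
    (h₃ : a₃ = (WithLp.equiv 1 (Fin 3 → ℝ)).symm ![1/3, 1/3, -2/3])
    (h₄ : a₄ = (WithLp.equiv 1 (Fin 3 → ℝ)).symm ![-1/6, -1/6, -1/6]) :
    convexHull ℝ ({a₁, a₂, a₃, a₄} : Set (PiLp 1 fun _ : Fin 3 => ℝ)) ⊆
      Metric.closedBall a₁ 1 ∪ Metric.closedBall a₂ 1 ∪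
        Metric.closedBall a₃ 1 ∪ Metric.closedBall a₄ 1 := by
  intro x hx
  rw [convexHull_insert (Set.insert_nonempty _ _), mem_convexJoin] at hx
  obtain ⟨_, rfl, y, hy, hxy⟩ := hx
  rw [convexHull_insert (Set.insert_nonempty _ _), mem_convexJoin] at hy
  obtain ⟨_, rfl, z, hz, hyz⟩ := hy
  rw [convexHull_pair] at hz
  obtain ⟨e, f, he, hf, hef, rfl⟩ := hz
  obtain ⟨c, d, hc, hd, hcd, rfl⟩ := hyz
  obtain ⟨a, b, ha, hb, hab, rfl⟩ := hxy
  subst h₁ h₂ h₃ h₄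
  -- barycentric coordinates
  set s₁ : ℝ := a with hs₁
  set s₂ : ℝ := b * c with hs₂
  set s₃ : ℝ := b * d * e with hs₃
  set s₄ : ℝ := b * d * f with hs₄
  have hsum : s₁ + s₂ + s₃ + s₄ = 1 := by
    rw [hs₁, hs₂, hs₃, hs₄]; linear_combination hab + b * hcd + b * d * hef
  have h2 : (0:ℝ) ≤ s₂ := mul_nonneg hb hc
  have h3 : (0:ℝ) ≤ s₃ := mul_nonneg (mul_nonneg hb hd) he
  have h4 : (0:ℝ) ≤ s₄ := mul_nonneg (mul_nonneg hb hd) hf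
  have hdist : ∀ w : PiLp 1 fun _ : Fin 3 => ℝ,
      dist (a • (WithLp.equiv 1 (Fin 3 → ℝ)).symm ![-2/3, 1/3, 1/3] +
        b • (c • (WithLp.equiv 1 (Fin 3 → ℝ)).symm ![1/3, -2/3, 1/3] +
          d • (e • (WithLp.equiv 1 (Fin 3 → ℝ)).symm ![1/3, 1/3, -2/3] +
            f • (WithLp.equiv 1 (Fin 3 → ℝ)).symm ![-1/6, -1/6, -1/6]))) w =
      |s₁ * (-2/3) + s₂ * (1/3) + s₃ * (1/3) + s₄ * (-1/6) - w 0| +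
      |s₁ * (1/3) + s₂ * (-2/3) + s₃ * (1/3) + s₄ * (-1/6) - w 1| +
      |s₁ * (1/3) + s₂ * (1/3) + s₃ * (-2/3) + s₄ * (-1/6) - w 2| := by
    intro w
    rw [PiLp.dist_eq_sum (by simp : (0:ℝ) < ENNReal.toReal 1)]
    simp only [ENNReal.toReal_one, Real.rpow_one, one_div, inv_one, Fin.sum_univ_three,
      PiLp.add_apply, PiLp.smul_apply, WithLp.equiv_symm_apply, WithLp.ofLp_toLp, PiLp.toLp_apply, Real.dist_eq, smul_eq_mul,
      Matrix.cons_val_zero, Matrix.cons_val_one, Matrix.head_cons, Matrix.cons_val_two,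
      Matrix.tail_cons, hs₁, hs₂, hs₃, hs₄]
    ring_nf
  have key : ∀ u v w : ℝ, u + v + w ≤ 1 → u + v - w ≤ 1 → u - v + w ≤ 1 → u - v - w ≤ 1 →
      -u + v + w ≤ 1 → -u + v - w ≤ 1 → -u - v + w ≤ 1 → -u - v - w ≤ 1 →
      |u| + |v| + |w| ≤ 1 := by
    intro u v w _ _ _ _ _ _ _ _
    rcases abs_cases u with ⟨h1, _⟩ | ⟨h1, _⟩ <;> rcases abs_cases v with ⟨h2, _⟩ | ⟨h2, _⟩ <;>
      rcases abs_cases w with ⟨h3, _⟩ | ⟨h3, _⟩ <;> linarith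
  rcases le_or_gt (1/2 : ℝ) s₁ with H1 | H1
  · refine Or.inl (Or.inl (Or.inl ?_))
    rw [Metric.mem_closedBall, hdist]
    simp only [WithLp.equiv_symm_apply, WithLp.ofLp_toLp, PiLp.toLp_apply, Matrix.cons_val_zero, Matrix.cons_val_one,
      Matrix.head_cons, Matrix.cons_val_two, Matrix.tail_cons]
    refine key _ _ _ ?_ ?_ ?_ ?_ ?_ ?_ ?_ ?_ <;> linarith
  rcases le_or_gt (1/2 : ℝ) s₂ with H2 | H2
  · refine Or.inl (Or.inl (Or.inr ?_))
    rw [Metric.mem_closedBall, hdist]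
    simp only [WithLp.equiv_symm_apply, WithLp.ofLp_toLp, PiLp.toLp_apply, Matrix.cons_val_zero, Matrix.cons_val_one,
      Matrix.head_cons, Matrix.cons_val_two, Matrix.tail_cons]
    refine key _ _ _ ?_ ?_ ?_ ?_ ?_ ?_ ?_ ?_ <;> linarith
  rcases le_or_gt (1/2 : ℝ) s₃ with H3 | H3
  · refine Or.inl (Or.inr ?_)
    rw [Metric.mem_closedBall, hdist]
    simp only [WithLp.equiv_symm_apply, WithLp.ofLp_toLp, PiLp.toLp_apply, Matrix.cons_val_zero, Matrix.cons_val_one,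
      Matrix.head_cons, Matrix.cons_val_two, Matrix.tail_cons]
    refine key _ _ _ ?_ ?_ ?_ ?_ ?_ ?_ ?_ ?_ <;> linarith
  · refine Or.inr ?_
    rw [Metric.mem_closedBall, hdist]
    simp only [WithLp.equiv_symm_apply, WithLp.ofLp_toLp, PiLp.toLp_apply, Matrix.cons_val_zero, Matrix.cons_val_one,
      Matrix.head_cons, Matrix.cons_val_two, Matrix.tail_cons]
    refine key _ _ _ ?_ ?_ ?_ ?_ ?_ ?_ ?_ ?_ <;> linarith
end

section
/- In ℓ₁³ with a₁ = (−2/3, 1/3, 1/3), a₂ = (1/3, −2/3, 1/3), a₃ = (1/3, 1/3, −2/3), a₄ = (−1/6, −1/6, −1/6), the interior of the tetrahedron Δ with vertices b₁ = (1/3, 1/12, 1/12), b₂ = (1/12, 1/3, 1/12), b₃ = (1/12, 1/12, 1/3), b₄ = (1/3, 1/3, 1/3) is disjoint from ⋃ᵢ B₁(aᵢ), while the boundary ∂Δ is contained in ⋃ᵢ B₁(aᵢ). In particular the union of those four unit balls is not simply connected (its complement has a bounded component). -/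
open scoped ENNReal

private abbrev E3 := PiLp 1 fun _ : Fin 3 => ℝ

private def pt (v : Fin 3 → ℝ) : E3 := (WithLp.equiv 1 (Fin 3 → ℝ)).symm v

attribute [local simp] Matrix.cons_val_two

@[simp] private lemma pt_apply (v : Fin 3 → ℝ) (i : Fin 3) : pt v i = v i := rfl

private lemma dist13 (x y : E3) :
    dist x y = |x 0 - y 0| + |x 1 - y 1| + |x 2 - y 2| := by
  rw [PiLp.dist_eq_sum (by norm_num : (0:ℝ) < (1:ℝ≥0∞).toReal)]
  norm_num [Fin.sum_univ_three, Real.dist_eq]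

private lemma dist_lb (x y : E3) (s : Fin 3 → ℝ) (hs : ∀ i, s i = 1 ∨ s i = -1) :
    s 0 * (x 0 - y 0) + s 1 * (x 1 - y 1) + s 2 * (x 2 - y 2) ≤ dist x y := by
  rw [dist13]
  have H : ∀ (si u : ℝ), si = 1 ∨ si = -1 → si * u ≤ |u| := by
    rintro si u (rfl | rfl)
    · simpa using le_abs_self u
    · simpa using neg_le_abs u
  have h0 := H (s 0) (x 0 - y 0) (hs 0)
  have h1 := H (s 1) (x 1 - y 1) (hs 1)
  have h2 := H (s 2) (x 2 - y 2) (hs 2)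
  linarith

private lemma dist_ub (x y : E3) (s : Fin 3 → ℝ) (hs : ∀ i, s i = 1 ∨ s i = -1)
    (h0 : 0 ≤ s 0 * (x 0 - y 0)) (h1 : 0 ≤ s 1 * (x 1 - y 1)) (h2 : 0 ≤ s 2 * (x 2 - y 2)) :
    dist x y = s 0 * (x 0 - y 0) + s 1 * (x 1 - y 1) + s 2 * (x 2 - y 2) := by
  rw [dist13]
  have H : ∀ (si u : ℝ), si = 1 ∨ si = -1 → 0 ≤ si * u → |u| = si * u := by
    rintro si u (rfl | rfl) h
    · rw [one_mul] at *; exact abs_of_nonneg h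
    · rw [neg_one_mul] at *; rw [abs_of_nonpos (by linarith)]
  rw [H _ _ (hs 0) h0, H _ _ (hs 1) h1, H _ _ (hs 2) h2]

private lemma convex_hs (c : Fin 3 → ℝ) (r : ℝ) :
    Convex ℝ {x : E3 | c 0 * x 0 + c 1 * x 1 + c 2 * x 2 ≤ r} := by
  refine convex_halfSpace_le ⟨fun a b => ?_, fun t a => ?_⟩ r
  · show c 0 * (a 0 + b 0) + c 1 * (a 1 + b 1) + c 2 * (a 2 + b 2) = _; ring
  · show c 0 * (t * a 0) + c 1 * (t * a 1) + c 2 * (t * a 2) = _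
    rw [smul_eq_mul]; ring

private lemma hull_le {s : Set E3} (c : Fin 3 → ℝ) (r : ℝ)
    (hs : ∀ y ∈ s, c 0 * y 0 + c 1 * y 1 + c 2 * y 2 ≤ r) :
    ∀ x ∈ convexHull ℝ s, c 0 * x 0 + c 1 * x 1 + c 2 * x 2 ≤ r :=
  fun _ hx => convexHull_min hs (convex_hs c r) hx

private lemma interior_lt {s : Set E3} (c : Fin 3 → ℝ) (r : ℝ)
    (hc : c 0 = 1 ∨ c 0 = -1)
    (hs : ∀ y ∈ s, c 0 * y 0 + c 1 * y 1 + c 2 * y 2 ≤ r)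
    (x : E3) (hx : x ∈ interior (convexHull ℝ s)) :
    c 0 * x 0 + c 1 * x 1 + c 2 * x 2 < r := by
  obtain ⟨ε, hε, hball⟩ := Metric.isOpen_iff.1 isOpen_interior x hx
  set y : E3 := x + (ε/2 * c 0) • pt ![1,0,0] with hy
  have hy0 : y 0 = x 0 + ε/2 * c 0 := by
    show x 0 + (ε/2 * c 0) * 1 = _; ring
  have hy1 : y 1 = x 1 := by show x 1 + (ε/2 * c 0) * 0 = _; ring
  have hy2 : y 2 = x 2 := by show x 2 + (ε/2 * c 0) * 0 = _; ring
  have hysq : c 0 * c 0 = 1 := by rcases hc with h | h <;> rw [h] <;> ring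
  have habs : |c 0| = 1 := by rcases hc with h | h <;> rw [h] <;> norm_num
  have hmem : y ∈ convexHull ℝ s := by
    refine interior_subset (hball ?_)
    rw [Metric.mem_ball, dist13, hy0, hy1, hy2]
    have h1 : x 0 + ε/2 * c 0 - x 0 = ε/2 * c 0 := by ring
    rw [h1]
    simp [abs_mul, habs]
    rw [abs_of_pos (by linarith : (0:ℝ) < ε/2)]
    linarith
  have := hull_le c r hs y hmem
  rw [hy0, hy1, hy2] at this
  nlinarith

private lemma mem_hull (x : E3)
    (h1 : x 1 + x 2 - x 0 < 1/3)
    (h2 : x 0 + x 2 - x 1 < 1/3)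
    (h3 : x 0 + x 1 - x 2 < 1/3)
    (h4 : 1/2 < x 0 + x 1 + x 2) :
    x ∈ convexHull ℝ ({pt ![1/3, 1/12, 1/12], pt ![1/12, 1/3, 1/12],
      pt ![1/12, 1/12, 1/3], pt ![1/3, 1/3, 1/3]} : Set E3) := by
  set S : Set E3 := {pt ![1/3, 1/12, 1/12], pt ![1/12, 1/3, 1/12],
      pt ![1/12, 1/12, 1/3], pt ![1/3, 1/3, 1/3]} with hS
  set w : Fin 4 → ℝ := ![2/3 - 2*(x 1 + x 2 - x 0), 2/3 - 2*(x 0 + x 2 - x 1),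
      2/3 - 2*(x 0 + x 1 - x 2), 2*(x 0 + x 1 + x 2) - 1] with hw
  set z : Fin 4 → E3 := ![pt ![1/3, 1/12, 1/12], pt ![1/12, 1/3, 1/12],
      pt ![1/12, 1/12, 1/3], pt ![1/3, 1/3, 1/3]] with hz
  have hwpos : ∀ i ∈ Finset.univ, 0 ≤ w i := by
    intro i _
    fin_cases i <;> simp [hw] <;> linarith
  have hwsum : ∑ i ∈ Finset.univ, w i = 1 := by
    rw [Fin.sum_univ_four]; simp [hw]; ring
  have hzmem : ∀ i ∈ Finset.univ, z i ∈ convexHull ℝ S := by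
    intro i _
    apply subset_convexHull
    fin_cases i <;> simp [hz, hS]
  have hsum := (convex_convexHull ℝ S).sum_mem hwpos hwsum hzmem
  rw [Fin.sum_univ_four] at hsum
  have key : x = w 0 • z 0 + w 1 • z 1 + w 2 • z 2 + w 3 • z 3 := by
    ext j
    fin_cases j <;>
    · show _ = w 0 * _ + w 1 * _ + w 2 * _ + w 3 * _
      simp [hw, hz, pt]
      ring
  rw [key]; exact hsum

set_option maxHeartbeats 1000000 in
theorem stmt_17
    (a₁ a₂ a₃ a₄ b₁ b₂ b₃ b₄ : PiLp 1 fun _ : Fin 3 => ℝ)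
    (ha₁ : a₁ = (WithLp.equiv 1 (Fin 3 → ℝ)).symm ![-2/3, 1/3, 1/3])
    (ha₂ : a₂ = (WithLp.equiv 1 (Fin 3 → ℝ)).symm ![1/3, -2/3, 1/3])
    (ha₃ : a₃ = (WithLp.equiv 1 (Fin 3 → ℝ)).symm ![1/3, 1/3, -2/3])
    (ha₄ : a₄ = (WithLp.equiv 1 (Fin 3 → ℝ)).symm ![-1/6, -1/6, -1/6])
    (hb₁ : b₁ = (WithLp.equiv 1 (Fin 3 → ℝ)).symm ![1/3, 1/12, 1/12])
    (hb₂ : b₂ = (WithLp.equiv 1 (Fin 3 → ℝ)).symm ![1/12, 1/3, 1/12])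
    (hb₃ : b₃ = (WithLp.equiv 1 (Fin 3 → ℝ)).symm ![1/12, 1/12, 1/3])
    (hb₄ : b₄ = (WithLp.equiv 1 (Fin 3 → ℝ)).symm ![1/3, 1/3, 1/3])
    (B : Set (PiLp 1 fun _ : Fin 3 => ℝ))
    (hB : B = Metric.closedBall a₁ 1 ∪ Metric.closedBall a₂ 1 ∪
        Metric.closedBall a₃ 1 ∪ Metric.closedBall a₄ 1)
    (Δ : Set (PiLp 1 fun _ : Fin 3 => ℝ))
    (hΔ : Δ = convexHull ℝ ({b₁, b₂, b₃, b₄} : Set (PiLp 1 fun _ : Fin 3 => ℝ))) :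
    interior Δ ∩ B = ∅ ∧ frontier Δ ⊆ B := by
  have hpt : ∀ v : Fin 3 → ℝ, (WithLp.equiv 1 (Fin 3 → ℝ)).symm v = pt v := fun _ => rfl
  rw [hpt] at ha₁ ha₂ ha₃ ha₄ hb₁ hb₂ hb₃ hb₄
  subst ha₁ ha₂ ha₃ ha₄ hb₁ hb₂ hb₃ hb₄ hB hΔ
  set S : Set E3 := {pt ![1/3, 1/12, 1/12], pt ![1/12, 1/3, 1/12],
      pt ![1/12, 1/12, 1/3], pt ![1/3, 1/3, 1/3]} with hS
  -- vertex checks for the four face functionals and the coordinate bounds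
  have hvert : ∀ (c : Fin 3 → ℝ) (r : ℝ),
      c 0 * (1/3) + c 1 * (1/12) + c 2 * (1/12) ≤ r →
      c 0 * (1/12) + c 1 * (1/3) + c 2 * (1/12) ≤ r →
      c 0 * (1/12) + c 1 * (1/12) + c 2 * (1/3) ≤ r →
      c 0 * (1/3) + c 1 * (1/3) + c 2 * (1/3) ≤ r →
      ∀ y ∈ S, c 0 * y 0 + c 1 * y 1 + c 2 * y 2 ≤ r := by
    intro c r H1 H2 H3 H4 y hy
    rcases hy with rfl | rfl | rfl | rfl
    exacts [by simpa using H1, by simpa using H2, by simpa using H3, by simpa using H4]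
  have vert1 := hvert ![-1,1,1] (1/3) (by norm_num) (by norm_num) (by norm_num) (by norm_num)
  have vert2 := hvert ![1,-1,1] (1/3) (by norm_num) (by norm_num) (by norm_num) (by norm_num)
  have vert3 := hvert ![1,1,-1] (1/3) (by norm_num) (by norm_num) (by norm_num) (by norm_num)
  have vert4 := hvert ![-1,-1,-1] (-(1/2)) (by norm_num) (by norm_num) (by norm_num) (by norm_num)
  constructor
  · rw [Set.eq_empty_iff_forall_notMem]
    rintro x ⟨hxi, hxB⟩
    have l1 := interior_lt ![-1,1,1] (1/3) (by norm_num) vert1 x hxi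
    have l2 := interior_lt ![1,-1,1] (1/3) (by norm_num) vert2 x hxi
    have l3 := interior_lt ![1,1,-1] (1/3) (by norm_num) vert3 x hxi
    have l4 := interior_lt ![-1,-1,-1] (-(1/2)) (by norm_num) vert4 x hxi
    norm_num at l1 l2 l3 l4
    rcases hxB with ((h | h) | h) | h <;> rw [Metric.mem_closedBall] at h
    · have lb := dist_lb x (pt ![-2/3, 1/3, 1/3]) ![1,-1,-1]
        (by intro i; fin_cases i <;> norm_num)
      norm_num at lb
      linarith
    · have lb := dist_lb x (pt ![1/3, -2/3, 1/3]) ![-1,1,-1]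
        (by intro i; fin_cases i <;> norm_num)
      norm_num at lb
      linarith
    · have lb := dist_lb x (pt ![1/3, 1/3, -2/3]) ![-1,-1,1]
        (by intro i; fin_cases i <;> norm_num)
      norm_num at lb
      linarith
    · have lb := dist_lb x (pt ![-1/6, -1/6, -1/6]) ![1,1,1]
        (by intro i; fin_cases i <;> norm_num)
      norm_num at lb
      linarith
  · intro x hx
    have hSfin : S.Finite := Set.toFinite _
    have hclosed : IsClosed (convexHull ℝ S) := (hSfin.isCompact_convexHull (𝕜 := ℝ)).isClosed
    rw [frontier, hclosed.closure_eq] at hx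
    obtain ⟨hxΔ, hxni⟩ := hx
    have m1 : x 1 + x 2 - x 0 ≤ 1/3 := by
      have := hull_le ![-1,1,1] (1/3) vert1 x hxΔ; norm_num at this; linarith
    have m2 : x 0 + x 2 - x 1 ≤ 1/3 := by
      have := hull_le ![1,-1,1] (1/3) vert2 x hxΔ; norm_num at this; linarith
    have m3 : x 0 + x 1 - x 2 ≤ 1/3 := by
      have := hull_le ![1,1,-1] (1/3) vert3 x hxΔ; norm_num at this; linarith
    have m4 : 1/2 ≤ x 0 + x 1 + x 2 := by
      have := hull_le ![-1,-1,-1] (-(1/2)) vert4 x hxΔ; norm_num at this; linarith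
    have u0 : x 0 ≤ 1/3 := by
      have := hull_le ![1,0,0] (1/3)
        (hvert _ _ (by norm_num) (by norm_num) (by norm_num) (by norm_num)) x hxΔ
      norm_num at this; linarith
    have u1 : x 1 ≤ 1/3 := by
      have := hull_le ![0,1,0] (1/3)
        (hvert _ _ (by norm_num) (by norm_num) (by norm_num) (by norm_num)) x hxΔ
      norm_num at this; linarith
    have u2 : x 2 ≤ 1/3 := by
      have := hull_le ![0,0,1] (1/3)
        (hvert _ _ (by norm_num) (by norm_num) (by norm_num) (by norm_num)) x hxΔ
      norm_num at this; linarith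
    have lo0 : 1/12 ≤ x 0 := by
      have := hull_le ![-1,0,0] (-(1/12))
        (hvert _ _ (by norm_num) (by norm_num) (by norm_num) (by norm_num)) x hxΔ
      norm_num at this; linarith
    have lo1 : 1/12 ≤ x 1 := by
      have := hull_le ![0,-1,0] (-(1/12))
        (hvert _ _ (by norm_num) (by norm_num) (by norm_num) (by norm_num)) x hxΔ
      norm_num at this; linarith
    have lo2 : 1/12 ≤ x 2 := by
      have := hull_le ![0,0,-1] (-(1/12))
        (hvert _ _ (by norm_num) (by norm_num) (by norm_num) (by norm_num)) x hxΔ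
      norm_num at this; linarith
    have hc : ∀ i : Fin 3, Continuous fun y : E3 => y i :=
      fun i => (continuous_apply i).comp (PiLp.continuous_ofLp 1 (fun _ : Fin 3 => ℝ))
    have hstrict : ¬(x 1 + x 2 - x 0 < 1/3 ∧ x 0 + x 2 - x 1 < 1/3 ∧
        x 0 + x 1 - x 2 < 1/3 ∧ 1/2 < x 0 + x 1 + x 2) := by
      rintro ⟨s1, s2, s3, s4⟩
      apply hxni
      rw [mem_interior]
      refine ⟨{y : E3 | y 1 + y 2 - y 0 < 1/3 ∧ y 0 + y 2 - y 1 < 1/3 ∧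
          y 0 + y 1 - y 2 < 1/3 ∧ 1/2 < y 0 + y 1 + y 2}, ?_, ?_, ⟨s1, s2, s3, s4⟩⟩
      · exact fun y hy => mem_hull y hy.1 hy.2.1 hy.2.2.1 hy.2.2.2
      · refine IsOpen.and (isOpen_lt (((hc 1).add (hc 2)).sub (hc 0)) continuous_const)
          (IsOpen.and (isOpen_lt (((hc 0).add (hc 2)).sub (hc 1)) continuous_const)
          (IsOpen.and (isOpen_lt (((hc 0).add (hc 1)).sub (hc 2)) continuous_const)
          (isOpen_lt continuous_const (((hc 0).add (hc 1)).add (hc 2)))))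
    rcases eq_or_lt_of_le m1 with e1 | s1
    · refine Or.inl (Or.inl (Or.inl ?_))
      rw [Metric.mem_closedBall,
        dist_ub x (pt ![-2/3, 1/3, 1/3]) ![1,-1,-1]
          (by intro i; fin_cases i <;> norm_num)
          (by norm_num; linarith) (by norm_num; linarith) (by norm_num; linarith)]
      norm_num; linarith
    rcases eq_or_lt_of_le m2 with e2 | s2
    · refine Or.inl (Or.inl (Or.inr ?_))
      rw [Metric.mem_closedBall,
        dist_ub x (pt ![1/3, -2/3, 1/3]) ![-1,1,-1]
          (by intro i; fin_cases i <;> norm_num)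
          (by norm_num; linarith) (by norm_num; linarith) (by norm_num; linarith)]
      norm_num; linarith
    rcases eq_or_lt_of_le m3 with e3 | s3
    · refine Or.inl (Or.inr ?_)
      rw [Metric.mem_closedBall,
        dist_ub x (pt ![1/3, 1/3, -2/3]) ![-1,-1,1]
          (by intro i; fin_cases i <;> norm_num)
          (by norm_num; linarith) (by norm_num; linarith) (by norm_num; linarith)]
      norm_num; linarith
    rcases eq_or_lt_of_le m4 with e4 | s4
    · refine Or.inr ?_
      rw [Metric.mem_closedBall,
        dist_ub x (pt ![-1/6, -1/6, -1/6]) ![1,1,1]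
          (by intro i; fin_cases i <;> norm_num)
          (by norm_num; linarith) (by norm_num; linarith) (by norm_num; linarith)]
      norm_num; linarith
    exact absurd ⟨s1, s2, s3, s4⟩ hstrict
end

section
/- Let X be a finite-dimensional real Banach space, dim X = n ≥ 2. Let P and Q be the intersections of the closed unit ball with two parallel affine subspaces of dimension k, where the subspace containing P passes through the origin. Then Q can be covered by a translate of η·P, where η = min{2k/(k+1), ζ_X}. In particular, every k-simplex Δ ⊆ Q is contained in a ball of radius η (in the norm whose unit ball section is P) centered at a point of Δ. -/
open scoped Pointwise

open Metric Set

lemma ivt_convex {X : Type*} [NormedAddCommGroup X] [NormedSpace ℝ X]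
    {W : Set X} (hW : Convex ℝ W) {a b : X} (ha : a ∈ W) (hb : b ∈ W)
    (f : X →L[ℝ] ℝ) {u : ℝ} (hfa : f a ≤ u) (hfb : u ≤ f b) :
    ∃ c ∈ W, f c = u := by
  have hcont : ContinuousOn (fun t : ℝ => f ((1 - t) • a + t • b)) (Set.Icc 0 1) := by
    apply Continuous.continuousOn; continuity
  have key := intermediate_value_Icc (zero_le_one (α := ℝ)) hcont
  have hu : u ∈ Set.Icc ((fun t : ℝ => f ((1 - t) • a + t • b)) 0)
      ((fun t : ℝ => f ((1 - t) • a + t • b)) 1) := by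
    simp only []
    norm_num
    exact ⟨hfa, hfb⟩
  obtain ⟨t, ht, hft⟩ := key hu
  exact ⟨(1 - t) • a + t • b, hW ha hb (by linarith [ht.2]) ht.1 (by ring), hft⟩

lemma lemmaA {X : Type*} [NormedAddCommGroup X] [NormedSpace ℝ X] [DecidableEq X]
    (K : X → Set X) (hKc : ∀ i, Convex ℝ (K i)) (hKcp : ∀ i, IsCompact (K i)) :
    ∀ (s : Finset X) (Δ : Set X), Convex ℝ Δ → IsCompact Δ → Δ.Nonempty →
      (∀ y ∈ Δ, ∃ i ∈ s, y ∈ K i) →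
      (∀ i ∈ s, (Δ ∩ ⋂ j ∈ s.erase i, K j).Nonempty) →
      (Δ ∩ ⋂ i ∈ s, K i).Nonempty := by
  intro s
  induction s using Finset.strongInduction with
  | _ s ih =>
    intro Δ hΔc hΔcp hΔne hcov hsub
    rcases s.eq_empty_or_nonempty with rfl | ⟨i₀, hi₀⟩
    · simpa using hΔne
    by_contra hcon
    rw [Set.not_nonempty_iff_eq_empty] at hcon
    have hmemfull : ∀ x, x ∈ Δ → x ∈ K i₀ → x ∈ ⋂ j ∈ s.erase i₀, K j → False := by
      intro x h1 h2 h3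
      have hx : x ∈ Δ ∩ ⋂ i ∈ s, K i := by
        refine ⟨h1, Set.mem_iInter₂.2 fun i hi => ?_⟩
        rcases eq_or_ne i i₀ with rfl | hne
        · exact h2
        · exact Set.mem_iInter₂.1 h3 i (Finset.mem_erase.2 ⟨hne, hi⟩)
      rw [hcon] at hx; exact hx
    set A1 : Set X := Δ ∩ K i₀ with hA1
    set B1 : Set X := Δ ∩ ⋂ j ∈ s.erase i₀, K j with hB1
    have hB1ne : B1.Nonempty := hsub i₀ hi₀
    have hA1ne : A1.Nonempty := by
      rcases (s.erase i₀).eq_empty_or_nonempty with he | ⟨j₁, hj₁⟩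
      · obtain ⟨y, hy⟩ := hΔne
        obtain ⟨i, hi, hyK⟩ := hcov y hy
        have hii : i = i₀ := by
          by_contra hne
          exact absurd (Finset.mem_erase.2 ⟨hne, hi⟩) (by simp [he])
        exact ⟨y, hy, hii ▸ hyK⟩
      · obtain ⟨z, hz1, hz2⟩ := hsub j₁ (Finset.mem_of_mem_erase hj₁)
        have hi₀e : i₀ ∈ s.erase j₁ :=
          Finset.mem_erase.2 ⟨fun h => (Finset.ne_of_mem_erase hj₁) h.symm, hi₀⟩
        exact ⟨z, hz1, Set.mem_iInter₂.1 hz2 i₀ hi₀e⟩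
    have hdisj : Disjoint A1 B1 := by
      rw [Set.disjoint_left]
      rintro x ⟨h1, h2⟩ ⟨h1', h3⟩
      exact hmemfull x h1 h2 h3
    have hA1c : Convex ℝ A1 := hΔc.inter (hKc i₀)
    have hA1cp : IsCompact A1 := hΔcp.inter_right (hKcp i₀).isClosed
    have hB1c : Convex ℝ B1 := hΔc.inter (convex_iInter₂ fun j _ => hKc j)
    have hB1cp : IsCompact B1 :=
      hΔcp.inter_right (isClosed_biInter fun j _ => (hKcp j).isClosed)
    obtain ⟨f, u, v', hfa, huv, hfb⟩ :=
      geometric_hahn_banach_compact_closed hA1c hA1cp hB1c hB1cp.isClosed hdisj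
    set α := (u + v') / 2 with hα
    have hfa' : ∀ a ∈ A1, f a < α := fun a ha => by
      have := hfa a ha; rw [hα]; linarith
    have hfb' : ∀ b ∈ B1, α < f b := fun b hb => by
      have := hfb b hb; rw [hα]; linarith
    set M := Δ ∩ {x | f x = α} with hM
    have hMc : Convex ℝ M := hΔc.inter (convex_hyperplane (f : X →ₗ[ℝ] ℝ).isLinear α)
    have hMcp : IsCompact M := hΔcp.inter_right (isClosed_eq f.continuous continuous_const)
    obtain ⟨a0, ha0⟩ := hA1ne
    obtain ⟨b0, hb0⟩ := hB1ne
    have hMne : M.Nonempty := by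
      obtain ⟨c, hc, hfc⟩ := ivt_convex hΔc ha0.1 hb0.1 f
        (le_of_lt (hfa' _ ha0)) (le_of_lt (hfb' _ hb0))
      exact ⟨c, hc, hfc⟩
    have hcovM : ∀ y ∈ M, ∃ i ∈ s.erase i₀, y ∈ K i := by
      rintro y ⟨hyΔ, hyα⟩
      obtain ⟨i, hi, hyK⟩ := hcov y hyΔ
      refine ⟨i, Finset.mem_erase.2 ⟨?_, hi⟩, hyK⟩
      rintro rfl
      exact absurd hyα (ne_of_lt (hfa' y ⟨hyΔ, hyK⟩))
    have hsubM : ∀ j ∈ s.erase i₀, (M ∩ ⋂ l ∈ (s.erase i₀).erase j, K l).Nonempty := by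
      intro j hj
      have hjs : j ∈ s := Finset.mem_of_mem_erase hj
      have hji₀ : j ≠ i₀ := Finset.ne_of_mem_erase hj
      set W := Δ ∩ ⋂ l ∈ (s.erase i₀).erase j, K l with hW
      have hWc : Convex ℝ W := hΔc.inter (convex_iInter₂ fun l _ => hKc l)
      obtain ⟨a1, ha1⟩ := hsub j hjs
      have ha1A : a1 ∈ A1 :=
        ⟨ha1.1, Set.mem_iInter₂.1 ha1.2 i₀ (Finset.mem_erase.2 ⟨fun h => hji₀ h.symm, hi₀⟩)⟩
      have ha1W : a1 ∈ W := by
        refine ⟨ha1.1, Set.mem_iInter₂.2 fun l hl => ?_⟩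
        have hl' : l ∈ s.erase j := by
          rcases Finset.mem_erase.1 hl with ⟨hlj, hl2⟩
          exact Finset.mem_erase.2 ⟨hlj, Finset.mem_of_mem_erase hl2⟩
        exact Set.mem_iInter₂.1 ha1.2 l hl'
      have hb0W : b0 ∈ W :=
        ⟨hb0.1, Set.mem_iInter₂.2 fun l hl =>
          Set.mem_iInter₂.1 hb0.2 l (Finset.mem_of_mem_erase hl)⟩
      obtain ⟨c, hcW, hfc⟩ := ivt_convex hWc ha1W hb0W f
        (le_of_lt (hfa' _ ha1A)) (le_of_lt (hfb' _ hb0))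
      exact ⟨c, ⟨hcW.1, hfc⟩, hcW.2⟩
    obtain ⟨z, hz1, hz2⟩ := ih (s.erase i₀) (Finset.erase_ssubset hi₀) M hMc hMcp hMne hcovM hsubM
    exact absurd hz1.2 (ne_of_gt (hfb' z ⟨hz1.1, hz2⟩))

lemma cover_key {X : Type*} [NormedAddCommGroup X] [NormedSpace ℝ X] [FiniteDimensional ℝ X]
    {k : ℕ} {L : Submodule ℝ X} (hL : Module.finrank ℝ L = k) {v : X} {ζ : ℝ}
    (hζ : ∀ D : Set X, D ⊆ Metric.closedBall 0 1 → ∀ y ∈ convexHull ℝ D,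
      Metric.infDist y D ≤ ζ)
    (S : Finset X) (hS1 : (S : Set X) ⊆ Metric.closedBall 0 1)
    (hS2 : (S : Set X) ⊆ v +ᵥ (L : Set X))
    {y : X} (hy : y ∈ convexHull ℝ (S : Set X)) :
    ∃ x ∈ S, dist y x ≤ min (2 * (k : ℝ) / ((k : ℝ) + 1)) ζ := by
  classical
  have hSne : (S : Set X).Nonempty := by
    rcases S.eq_empty_or_nonempty with rfl | h
    · simp at hy
    · exact ⟨h.choose, h.choose_spec⟩
  obtain ⟨x₀, hx₀S, hx₀d⟩ := S.finite_toSet.isCompact.exists_infDist_eq_dist hSne y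
  refine ⟨x₀, hx₀S, ?_⟩
  rw [← hx₀d]
  refine le_min ?_ (hζ S hS1 y hy)
  -- Caratheodory part
  rw [convexHull_eq_union] at hy
  simp only [Set.mem_iUnion] at hy
  obtain ⟨t, hts, hai, hyt⟩ := hy
  have htne : t.Nonempty := by
    rcases t.eq_empty_or_nonempty with rfl | h
    · simp at hyt
    · exact h
  have hcard : (t.card : ℝ) ≤ (k : ℝ) + 1 := by
    have h1 := hai.card_le_finrank_succ
    have hrange : Set.range ((↑) : t → X) = (t : Set X) := Subtype.range_coe
    have hvs : vectorSpan ℝ (t : Set X) ≤ L := by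
      rw [vectorSpan_def, Submodule.span_le]
      rintro w hw
      rw [Set.mem_vsub] at hw
      obtain ⟨p, hp, q, hq, rfl⟩ := hw
      have hp' : p ∈ v +ᵥ (L : Set X) := hS2 (hts hp)
      have hq' : q ∈ v +ᵥ (L : Set X) := hS2 (hts hq)
      rw [Set.mem_vadd_set] at hp' hq'
      obtain ⟨lp, hlp, rfl⟩ := hp'
      obtain ⟨lq, hlq, rfl⟩ := hq'
      have heq : (v +ᵥ lp) -ᵥ (v +ᵥ lq) = lp - lq := by
        simp only [vadd_eq_add, vsub_eq_sub]
        abel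
      rw [heq]
      exact L.sub_mem hlp hlq
    have hfin : Module.finrank ℝ (vectorSpan ℝ (t : Set X)) ≤ k := by
      rw [← hL]
      exact Submodule.finrank_mono hvs
    rw [hrange] at h1
    rw [Fintype.card_coe] at h1
    have : t.card ≤ k + 1 := by omega
    exact_mod_cast this
  rw [Finset.convexHull_eq] at hyt
  obtain ⟨w, hw0, hw1, hwy⟩ := hyt
  have hk1 : (0 : ℝ) < (k : ℝ) + 1 := by positivity
  have hex : ∃ i ∈ t, 1 / ((k : ℝ) + 1) ≤ w i := by
    by_contra hno
    push_neg at hno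
    have hlt : ∑ j ∈ t, w j < ∑ _j ∈ t, 1 / ((k : ℝ) + 1) :=
      Finset.sum_lt_sum_of_nonempty htne fun j hj => hno j hj
    rw [hw1, Finset.sum_const, nsmul_eq_mul] at hlt
    have hle : (t.card : ℝ) * (1 / ((k : ℝ) + 1)) ≤ 1 := by
      rw [mul_one_div, div_le_one hk1]
      exact hcard
    linarith
  obtain ⟨i, hit, hwi⟩ := hex
  have hrep : y - i = ∑ j ∈ t, w j • (j - i) := by
    have h1 : ∑ j ∈ t, w j • (j - i) = (∑ j ∈ t, w j • j) - (∑ j ∈ t, w j) • i := by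
      rw [Finset.sum_smul, ← Finset.sum_sub_distrib]
      exact Finset.sum_congr rfl fun j _ => smul_sub _ _ _
    rw [h1, hw1, one_smul]
    congr 1
    rw [← hwy, Finset.centerMass_eq_of_sum_1 _ _ hw1]
    rfl
  have hnorm : ‖y - i‖ ≤ 2 * (1 - w i) := by
    rw [hrep]
    have hstep1 : ‖∑ j ∈ t, w j • (j - i)‖ ≤ ∑ j ∈ t, w j * ‖j - i‖ := by
      refine (norm_sum_le _ _).trans (le_of_eq ?_)
      refine Finset.sum_congr rfl fun j hj => ?_
      rw [norm_smul, Real.norm_of_nonneg (hw0 j hj)]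
    have hsplit : ∑ j ∈ t, w j * ‖j - i‖ = ∑ j ∈ t.erase i, w j * ‖j - i‖ := by
      rw [← Finset.add_sum_erase t _ hit]
      simp
    have hb : ∀ j ∈ t.erase i, w j * ‖j - i‖ ≤ w j * 2 := by
      intro j hj
      have hj' : j ∈ t := Finset.mem_of_mem_erase hj
      have hjb := hS1 (hts hj')
      have hib := hS1 (hts hit)
      rw [Metric.mem_closedBall, dist_zero_right] at hjb hib
      have h2 : ‖j - i‖ ≤ 2 := by
        calc ‖j - i‖ ≤ ‖j‖ + ‖i‖ := norm_sub_le _ _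
          _ ≤ 2 := by linarith
      exact mul_le_mul_of_nonneg_left h2 (hw0 j hj')
    have hsum2 : ∑ j ∈ t.erase i, w j * 2 = 2 * (1 - w i) := by
      have hae := Finset.add_sum_erase t w hit
      rw [hw1] at hae
      rw [← Finset.sum_mul]
      linarith
    calc ‖∑ j ∈ t, w j • (j - i)‖ ≤ ∑ j ∈ t, w j * ‖j - i‖ := hstep1
      _ = ∑ j ∈ t.erase i, w j * ‖j - i‖ := hsplit
      _ ≤ ∑ j ∈ t.erase i, w j * 2 := Finset.sum_le_sum hb
      _ = 2 * (1 - w i) := hsum2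
  have hid : Metric.infDist y (S : Set X) ≤ dist y i :=
    Metric.infDist_le_dist_of_mem (hts hit)
  have h2 : dist y i ≤ 2 * (k : ℝ) / ((k : ℝ) + 1) := by
    rw [dist_eq_norm]
    have heq : 2 * (k : ℝ) / ((k : ℝ) + 1) = 2 - 2 / ((k : ℝ) + 1) := by
      field_simp
      ring
    have h3 : 2 / ((k : ℝ) + 1) ≤ 2 * w i := by
      have : 2 * (1 / ((k : ℝ) + 1)) ≤ 2 * w i := by linarith
      linarith [this, (by ring : 2 * (1 / ((k : ℝ) + 1)) = 2 / ((k : ℝ) + 1))]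
    rw [heq]
    linarith
  linarith

lemma claimC {X : Type*} [NormedAddCommGroup X] [NormedSpace ℝ X] [FiniteDimensional ℝ X]
    [DecidableEq X]
    {Q : Set X} {η : ℝ}     (hcov : ∀ S : Finset X, (S : Set X) ⊆ Q → ∀ y ∈ convexHull ℝ (S : Set X),
      ∃ x ∈ S, dist y x ≤ η) :
    ∀ S : Finset X, (S : Set X) ⊆ Q → S.Nonempty →
      (convexHull ℝ (S : Set X) ∩ ⋂ x ∈ S, Metric.closedBall x η).Nonempty := by
  intro S
  induction S using Finset.strongInduction with
  | _ S ih =>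
    intro hSQ hSne
    apply lemmaA (fun x => Metric.closedBall x η) (fun i => convex_closedBall i η)
      (fun i => isCompact_closedBall i η)
    · exact convex_convexHull ℝ _
    · exact S.finite_toSet.isCompact_convexHull (𝕜 := ℝ)
    · obtain ⟨x, hx⟩ := hSne
      exact ⟨x, subset_convexHull ℝ _ hx⟩
    · intro y hy
      obtain ⟨x, hxS, hd⟩ := hcov S hSQ y hy
      exact ⟨x, hxS, Metric.mem_closedBall.2 hd⟩
    · intro i hi
      rcases (S.erase i).eq_empty_or_nonempty with he | hne
      · obtain ⟨x, hx⟩ := hSne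
        exact ⟨x, subset_convexHull ℝ _ hx, by simp [he]⟩
      · obtain ⟨z, hz1, hz2⟩ := ih (S.erase i) (Finset.erase_ssubset hi)
          ((Finset.coe_subset.2 (Finset.erase_subset i S)).trans hSQ) hne
        exact ⟨z, convexHull_mono (Finset.coe_subset.2 (Finset.erase_subset i S)) hz1, hz2⟩

theorem stmt_19 {X : Type*} [NormedAddCommGroup X] [NormedSpace ℝ X]
    [FiniteDimensional ℝ X] (n : ℕ) (hn : 2 ≤ n) (hdim : Module.finrank ℝ X = n)
    (k : ℕ) (L : Submodule ℝ X) (hL : Module.finrank ℝ L = k) (v : X)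
    (P Q : Set X)
    (hP : P = Metric.closedBall 0 1 ∩ (L : Set X))
    (hQ : Q = Metric.closedBall 0 1 ∩ (v +ᵥ (L : Set X)))
    (η : ℝ)
    (hη : η = min (2 * (k : ℝ) / ((k : ℝ) + 1))
      (sSup {d : ℝ | ∃ D ⊆ Metric.closedBall (0 : X) 1,
        ∃ y ∈ convexHull ℝ D, d = Metric.infDist y D})) :
    ∃ t : X, Q ⊆ t +ᵥ η • P := by
  classical
  set Z : Set ℝ := {d : ℝ | ∃ D ⊆ Metric.closedBall (0 : X) 1,
    ∃ y ∈ convexHull ℝ D, d = Metric.infDist y D} with hZ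
  set ζ : ℝ := sSup Z with hζdef
  -- boundedness of Z
  have hZbdd : BddAbove Z := by
    refine ⟨2, ?_⟩
    rintro d ⟨D, hD, y, hyD, rfl⟩
    have hDne : D.Nonempty := by
      rcases D.eq_empty_or_nonempty with rfl | h
      · simp at hyD
      · exact h
    obtain ⟨z, hz⟩ := hDne
    have hyb : ‖y‖ ≤ 1 := by
      have : y ∈ Metric.closedBall (0 : X) 1 :=
        convexHull_min hD (convex_closedBall _ _) hyD
      rwa [Metric.mem_closedBall, dist_zero_right] at this
    have hzb : ‖z‖ ≤ 1 := by
      have := hD hz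
      rwa [Metric.mem_closedBall, dist_zero_right] at this
    calc Metric.infDist y D ≤ dist y z := Metric.infDist_le_dist_of_mem hz
      _ ≤ ‖y‖ + ‖z‖ := by rw [dist_eq_norm]; exact norm_sub_le _ _
      _ ≤ 2 := by linarith
  have hζup : ∀ D : Set X, D ⊆ Metric.closedBall 0 1 → ∀ y ∈ convexHull ℝ D,
      Metric.infDist y D ≤ ζ := by
    intro D hD y hy
    exact le_csSup hZbdd ⟨D, hD, y, hy, rfl⟩
  have hζ0 : 0 ≤ ζ := by
    refine Real.sSup_nonneg ?_
    rintro d ⟨D, hD, y, hyD, rfl⟩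
    exact Metric.infDist_nonneg
  have hη0 : 0 ≤ η := by
    rw [hη]
    exact le_min (by positivity) hζ0
  rcases Q.eq_empty_or_nonempty with hQ0 | hQne
  · exact ⟨0, by simp [hQ0]⟩
  have hQball : Q ⊆ Metric.closedBall 0 1 := by rw [hQ]; exact Set.inter_subset_left
  have hQflat : Q ⊆ v +ᵥ (L : Set X) := by rw [hQ]; exact Set.inter_subset_right
  have hLclosed : IsClosed (L : Set X) := Submodule.closed_of_finiteDimensional L
  have hflatclosed : IsClosed (v +ᵥ (L : Set X)) := by
    have heq : v +ᵥ (L : Set X) = (fun x => -v + x) ⁻¹' (L : Set X) := by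
      ext x
      simp [Set.mem_vadd_set_iff_neg_vadd_mem, vadd_eq_add]
    rw [heq]
    exact hLclosed.preimage (by continuity)
  have hQcomp : IsCompact Q := by
    rw [hQ]
    exact (isCompact_closedBall 0 1).inter_right hflatclosed
  have hQconv : Convex ℝ Q := by
    rw [hQ]
    exact (convex_closedBall _ _).inter ((L.convex).vadd v)
  -- covering hypothesis
  have hcov : ∀ S : Finset X, (S : Set X) ⊆ Q → ∀ y ∈ convexHull ℝ (S : Set X),
      ∃ x ∈ S, dist y x ≤ η := by
    intro S hS y hy
    have := cover_key hL hζup S (hS.trans hQball) (hS.trans hQflat) hy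
    rw [hη]
    exact this
  -- FIP
  have key : (Q ∩ ⋂ q : Q, Metric.closedBall (q : X) η).Nonempty := by
    by_contra hcon
    rw [Set.not_nonempty_iff_eq_empty] at hcon
    obtain ⟨t, ht⟩ := hQcomp.elim_finite_subfamily_closed
      (fun q : Q => Metric.closedBall (q : X) η)
      (fun q => Metric.isClosed_closedBall) hcon
    set S : Finset X := t.image Subtype.val with hS
    have hSQ : (S : Set X) ⊆ Q := by
      intro x hx
      rw [hS] at hx
      simp only [Finset.coe_image, Set.mem_image, Finset.mem_coe] at hx
      obtain ⟨q, _, rfl⟩ := hx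
      exact q.2
    rcases S.eq_empty_or_nonempty with hS0 | hSne
    · have ht0 : t = ∅ := by
        rw [hS] at hS0
        exact Finset.image_eq_empty.1 hS0
      rw [ht0] at ht
      simp only [Finset.notMem_empty, Set.iInter_of_empty, Set.iInter_univ,
        Set.inter_univ] at ht
      exact hQne.ne_empty ht
    · obtain ⟨z, hz1, hz2⟩ := claimC hcov S hSQ hSne
      have hzQ : z ∈ Q := convexHull_min hSQ hQconv hz1
      have hzt : z ∈ Q ∩ ⋂ q ∈ t, Metric.closedBall (q : X) η := by
        refine ⟨hzQ, Set.mem_iInter₂.2 fun q hq => ?_⟩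
        have hqS : (q : X) ∈ S := by
          rw [hS]
          exact Finset.mem_image_of_mem _ hq
        exact Set.mem_iInter₂.1 hz2 (q : X) hqS
      rw [ht] at hzt
      exact hzt
  obtain ⟨t₀, ht₀Q, ht₀b⟩ := key
  have hdist : ∀ q ∈ Q, dist q t₀ ≤ η := by
    intro q hq
    have := Set.mem_iInter.1 ht₀b ⟨q, hq⟩
    rw [Metric.mem_closedBall] at this
    rw [dist_comm]
    exact this
  refine ⟨t₀, fun q hq => ?_⟩
  have hqL : q - t₀ ∈ L := by
    have h1 : -v + q ∈ L := by
      have := hQflat hq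
      rwa [Set.mem_vadd_set_iff_neg_vadd_mem] at this
    have h2 : -v + t₀ ∈ L := by
      have := hQflat ht₀Q
      rwa [Set.mem_vadd_set_iff_neg_vadd_mem] at this
    have heq : q - t₀ = (-v + q) - (-v + t₀) := by abel
    rw [heq]
    exact L.sub_mem h1 h2
  have hP0 : (0 : X) ∈ P := by
    rw [hP]
    exact ⟨Metric.mem_closedBall_self zero_le_one, L.zero_mem⟩
  rw [Set.mem_vadd_set]
  rcases eq_or_lt_of_le hη0 with hη0' | hηpos
  · have hq0 : q = t₀ := by
      have h := hdist q hq
      rw [← hη0'] at h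
      have := dist_le_zero.1 h
      exact this
    refine ⟨0, ⟨0, hP0, smul_zero _⟩, by rw [hq0]; simp⟩
  · refine ⟨q - t₀, ⟨η⁻¹ • (q - t₀), ?_, smul_inv_smul₀ (ne_of_gt hηpos) _⟩, by rw [vadd_eq_add]; abel⟩
    rw [hP]
    constructor
    · rw [Metric.mem_closedBall, dist_zero_right, norm_smul, norm_inv,
        Real.norm_of_nonneg hη0]
      have hd : ‖q - t₀‖ ≤ η := by
        rw [← dist_eq_norm]
        exact hdist q hq
      rw [inv_mul_le_iff₀ hηpos, mul_one]
      exact hd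
    · exact L.smul_mem _ hqL
end
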